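/- arXiv:2410.13965 — 7 statements merged into one kernel-verified Lean document; each statement's English description precedes it below -/
import Mathlib

section
/- Let φ : 𝔻 → 𝔻 be holomorphic, w ∈ 𝔻, and δ := 1 - D_h φ(w). Then for every z ∈ 𝔻, e^{-k(z,w)} sinh(k(z,w)) · δ ≤ k(z,w) - k(φ(z),φ(w)) ≤ e^{k(z,w)} sinh(k(z,w)) · δ, where k denotes the hyperbolic distance on 𝔻. -/
open Metric Set

noncomputable def Dh (φ : ℂ → ℂ) (z : ℂ) : ℝ :=
  (1 - ‖z‖ ^ 2) * ‖deriv φ z‖ / (1 - ‖φ z‖ ^ 2)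

/-- Pseudo-hyperbolic distance on the unit disk. -/
noncomputable def pdist (z w : ℂ) : ℝ :=
  ‖(z - w) / (1 - (starRingEnd ℂ) w * z)‖

/-- Hyperbolic distance on the unit disk. -/
noncomputable def hdist (z w : ℂ) : ℝ :=
  Real.log ((1 + pdist z w) / (1 - pdist z w))

noncomputable def moeb (a z : ℂ) : ℂ := (a - z) / (1 - (starRingEnd ℂ) a * z)

lemma key_id (a b : ℂ) :
    ‖1 - (starRingEnd ℂ) b * a‖ ^ 2 =
      ‖a - b‖ ^ 2 + (1 - ‖a‖ ^ 2) * (1 - ‖b‖ ^ 2) := by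
  simp only [Complex.sq_norm, Complex.normSq_apply, Complex.sub_re, Complex.sub_im,
    Complex.mul_re, Complex.mul_im, Complex.one_re, Complex.one_im, Complex.conj_re,
    Complex.conj_im]
  ring

lemma moeb_denom_ne {a z : ℂ} (h : ‖a‖ * ‖z‖ < 1) :
    1 - (starRingEnd ℂ) a * z ≠ 0 := by
  intro h0
  have h1 : (starRingEnd ℂ) a * z = 1 := by linear_combination -h0
  have h2 := congrArg norm h1
  rw [norm_mul, Complex.norm_conj, norm_one] at h2
  rw [h2] at h
  exact lt_irrefl 1 h

lemma moeb_abs_lt {a z : ℂ} (ha : ‖a‖ < 1) (hz : ‖z‖ < 1) :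
    ‖moeb a z‖ < 1 := by
  have hd : 1 - (starRingEnd ℂ) a * z ≠ 0 :=
    moeb_denom_ne (by nlinarith [norm_nonneg a, norm_nonneg z])
  have hdpos : 0 < ‖1 - (starRingEnd ℂ) a * z‖ := by
    simpa [norm_pos_iff] using hd
  rw [moeb, norm_div, div_lt_one hdpos]
  have hk := key_id z a
  rw [norm_sub_rev a z]
  refine lt_of_pow_lt_pow_left₀ 2 hdpos.le ?_
  have hp : 0 < (1 - ‖z‖ ^ 2) * (1 - ‖a‖ ^ 2) :=
    mul_pos (by nlinarith [norm_nonneg z]) (by nlinarith [norm_nonneg a])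
  linarith [hk]

lemma moeb_invol {a z : ℂ} (ha : ‖a‖ < 1) (hz : ‖z‖ < 1) :
    moeb a (moeb a z) = z := by
  have hd : 1 - (starRingEnd ℂ) a * z ≠ 0 :=
    moeb_denom_ne (by nlinarith [norm_nonneg a, norm_nonneg z])
  have hd2 : 1 - (starRingEnd ℂ) a * a ≠ 0 :=
    moeb_denom_ne (by nlinarith [norm_nonneg a])
  have num : a - (a - z) / (1 - (starRingEnd ℂ) a * z)
      = z * (1 - (starRingEnd ℂ) a * a) / (1 - (starRingEnd ℂ) a * z) := by
    rw [eq_div_iff hd, sub_mul, div_mul_cancel₀ _ hd]; ring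
  have den : 1 - (starRingEnd ℂ) a * ((a - z) / (1 - (starRingEnd ℂ) a * z))
      = (1 - (starRingEnd ℂ) a * a) / (1 - (starRingEnd ℂ) a * z) := by
    rw [eq_div_iff hd, sub_mul, mul_assoc ((starRingEnd ℂ) a), div_mul_cancel₀ _ hd]; ring
  rw [moeb, moeb, num, den, div_div_div_comm, div_self hd, div_one, mul_div_assoc,
    div_self hd2, mul_one]

lemma moeb_hasDerivAt (a z : ℂ) (hd : 1 - (starRingEnd ℂ) a * z ≠ 0) :
    HasDerivAt (moeb a) (((starRingEnd ℂ) a * a - 1) / (1 - (starRingEnd ℂ) a * z) ^ 2) z := by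
  have h1 : HasDerivAt (fun y : ℂ => a - y) (-1) z := by
    simpa using (hasDerivAt_id z).const_sub a
  have h2 : HasDerivAt (fun y : ℂ => 1 - (starRingEnd ℂ) a * y) (-((starRingEnd ℂ) a)) z := by
    simpa using ((hasDerivAt_id z).const_mul ((starRingEnd ℂ) a)).const_sub 1
  have h3 := h1.div h2 hd
  refine h3.congr_deriv ?_
  ring

set_option maxHeartbeats 1000000 in
lemma sp_ineq {a b : ℂ} {r : ℝ} (ha : ‖a‖ < 1) (hb : ‖b‖ < 1)
    (hr0 : 0 ≤ r) (hr1 : r < 1)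
    (h : ‖(a - b) / (1 - (starRingEnd ℂ) b * a)‖ ≤ r) :
    ‖b‖ - r ≤ ‖a‖ * (1 - ‖b‖ * r) ∧
    ‖a‖ * (1 + ‖b‖ * r) ≤ ‖b‖ + r := by
  set t := ‖a‖ with hta
  set c := ‖b‖ with htb
  have ht0 : 0 ≤ t := norm_nonneg a
  have hc0 : 0 ≤ c := norm_nonneg b
  have hd : 1 - (starRingEnd ℂ) b * a ≠ 0 := by
    intro h0
    have h1 : (starRingEnd ℂ) b * a = 1 := by linear_combination -h0
    have h2 := congrArg norm h1
    rw [norm_mul, Complex.norm_conj, norm_one] at h2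
    nlinarith
  set D := ‖1 - (starRingEnd ℂ) b * a‖ with hD
  have hDpos : 0 < D := by simpa [hD, norm_pos_iff] using hd
  have habs : ‖a - b‖ ≤ r * D := by
    rw [norm_div, div_le_iff₀ hDpos] at h
    exact h
  have hkey : D ^ 2 = ‖a - b‖ ^ 2 + (1 - t ^ 2) * (1 - c ^ 2) := key_id a b
  have hDlow : 1 - t * c ≤ D := by
    have h1 : ‖(1 : ℂ)‖ - ‖(starRingEnd ℂ) b * a‖ ≤ ‖1 - (starRingEnd ℂ) b * a‖ :=
      norm_sub_norm_le _ _
    have h2 : ‖(starRingEnd ℂ) b * a‖ = c * t := by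
      simp [norm_mul, Complex.norm_conj, hta, htb]
    rw [h2, norm_one] at h1
    simpa [hD, mul_comm] using h1
  have hab2 : ‖a - b‖ ^ 2 ≤ r ^ 2 * D ^ 2 := by
    nlinarith [norm_nonneg (a - b)]
  have htc : t * c < 1 := by nlinarith
  have hD2' : (1 - t * c) ^ 2 ≤ D ^ 2 := by nlinarith
  have e1 : D ^ 2 * (1 - r ^ 2) ≤ (1 - t ^ 2) * (1 - c ^ 2) := by nlinarith [hab2, hkey]
  have e2 : (1 - t * c) ^ 2 * (1 - r ^ 2) ≤ D ^ 2 * (1 - r ^ 2) :=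
    mul_le_mul_of_nonneg_right hD2' (by nlinarith)
  have hmain : (t - c) ^ 2 ≤ (r * (1 - t * c)) ^ 2 := by nlinarith [e1, e2]
  have hrtc : 0 ≤ r * (1 - t * c) := mul_nonneg hr0 (by nlinarith)
  have habs2 : |t - c| ≤ r * (1 - t * c) := by
    have h := Real.sqrt_le_sqrt hmain
    rwa [Real.sqrt_sq_eq_abs, Real.sqrt_sq hrtc] at h
  rw [abs_le] at habs2
  constructor <;> nlinarith [habs2.1, habs2.2]

lemma endgame {ρ c t : ℝ} (hρ0 : 0 ≤ ρ) (hρ1 : ρ < 1) (hc0 : 0 ≤ c) (hc1 : c ≤ 1)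
    (ht0 : 0 ≤ t) (ht1 : t ≤ 1)
    (h1 : c - ρ ≤ t * (1 - c * ρ)) (h2 : t * (1 + c * ρ) ≤ c + ρ) :
    2 * ρ / (1 + ρ) ^ 2 * (1 - c) ≤
        Real.log ((1 + ρ) / (1 - ρ)) - Real.log ((1 + t * ρ) / (1 - t * ρ)) ∧
      Real.log ((1 + ρ) / (1 - ρ)) - Real.log ((1 + t * ρ) / (1 - t * ρ)) ≤
        2 * ρ / (1 - ρ) ^ 2 * (1 - c) := by
  set u := t * ρ with hu
  have hu0 : 0 ≤ u := mul_nonneg ht0 hρ0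
  have hu1 : u < 1 := lt_of_le_of_lt (by nlinarith) hρ1
  have p1 : (0:ℝ) < 1 + ρ := by linarith
  have p2 : (0:ℝ) < 1 - ρ := by linarith
  have p3 : (0:ℝ) < 1 + u := by linarith
  have p4 : (0:ℝ) < 1 - u := by linarith
  have hX : (0:ℝ) < (1 + ρ) / (1 - ρ) := div_pos p1 p2
  have hZ : (0:ℝ) < (1 + u) / (1 - u) := div_pos p3 p4
  have hlog : Real.log ((1 + ρ) / (1 - ρ)) - Real.log ((1 + u) / (1 - u)) =
      Real.log (((1 + ρ) * (1 - u)) / ((1 - ρ) * (1 + u))) := by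
    rw [← Real.log_div hX.ne' hZ.ne']
    congr 1
    field_simp
  have hYpos : (0:ℝ) < ((1 + ρ) * (1 - u)) / ((1 - ρ) * (1 + u)) :=
    div_pos (mul_pos p1 p4) (mul_pos p2 p3)
  set Y := ((1 + ρ) * (1 - u)) / ((1 - ρ) * (1 + u)) with hYdef
  constructor
  · rw [hlog]
    have hlow : 1 - Y⁻¹ ≤ Real.log Y := by
      have := Real.log_le_sub_one_of_pos (inv_pos.mpr hYpos)
      rw [Real.log_inv] at this
      linarith
    have hYinv : Y⁻¹ = ((1 - ρ) * (1 + u)) / ((1 + ρ) * (1 - u)) := by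
      rw [hYdef, inv_div]
    have hB : Y⁻¹ ≤ (1 + 2 * c * ρ + ρ ^ 2) / (1 + ρ) ^ 2 := by
      rw [hYinv, div_le_div_iff₀ (mul_pos p1 p4) (by positivity)]
      have hb' : u * (1 + c * ρ) ≤ ρ * (c + ρ) := by
        rw [hu]; nlinarith [mul_le_mul_of_nonneg_left h2 hρ0]
      have base : (1 - ρ ^ 2) * (1 + u) ≤ (1 + 2 * c * ρ + ρ ^ 2) * (1 - u) := by
        nlinarith [hb']
      nlinarith [mul_le_mul_of_nonneg_left base p1.le]
    have heq : 1 - (1 + 2 * c * ρ + ρ ^ 2) / (1 + ρ) ^ 2 = 2 * ρ / (1 + ρ) ^ 2 * (1 - c) := by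
      field_simp
      ring
    linarith
  · rw [hlog]
    have hup : Real.log Y ≤ Y - 1 := Real.log_le_sub_one_of_pos hYpos
    have hB : Y ≤ (1 - 2 * c * ρ + ρ ^ 2) / (1 - ρ) ^ 2 := by
      rw [hYdef, div_le_div_iff₀ (mul_pos p2 p3) (by positivity)]
      have hb' : ρ * (c - ρ) ≤ u * (1 - c * ρ) := by
        rw [hu]; nlinarith [mul_le_mul_of_nonneg_left h1 hρ0]
      have base : (1 - ρ ^ 2) * (1 - u) ≤ (1 - 2 * c * ρ + ρ ^ 2) * (1 + u) := by
        nlinarith [hb']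
      nlinarith [mul_le_mul_of_nonneg_left base p2.le]
    have heq : (1 - 2 * c * ρ + ρ ^ 2) / (1 - ρ) ^ 2 - 1 = 2 * ρ / (1 - ρ) ^ 2 * (1 - c) := by
      field_simp
      ring
    linarith

lemma mem_ball_abs {z : ℂ} : z ∈ ball (0:ℂ) 1 ↔ ‖z‖ < 1 := by
  rw [mem_ball_zero_iff]

theorem refined_schwarz_pick (φ : ℂ → ℂ)
    (hφ : DifferentiableOn ℂ φ (ball (0:ℂ) 1))
    (hmap : MapsTo φ (ball (0:ℂ) 1) (ball (0:ℂ) 1))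
    (w : ℂ) (hw : w ∈ ball (0:ℂ) 1) :
    ∀ z ∈ ball (0:ℂ) 1,
      Real.exp (-(hdist z w)) * Real.sinh (hdist z w) * (1 - Dh φ w)
          ≤ hdist z w - hdist (φ z) (φ w)
      ∧ hdist z w - hdist (φ z) (φ w)
          ≤ Real.exp (hdist z w) * Real.sinh (hdist z w) * (1 - Dh φ w) := by
  intro z hz
  have hw1 : ‖w‖ < 1 := mem_ball_abs.mp hw
  have hz1 : ‖z‖ < 1 := mem_ball_abs.mp hz
  have hφw : ‖φ w‖ < 1 := mem_ball_abs.mp (hmap hw)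
  set ψ : ℂ → ℂ := fun v => moeb (φ w) (φ (moeb w v)) with hψdef
  have hψd : DifferentiableOn ℂ ψ (ball 0 1) := by
    intro v hv
    have hv1 : ‖v‖ < 1 := mem_ball_abs.mp hv
    have h1 : DifferentiableAt ℂ (moeb w) v :=
      (moeb_hasDerivAt w v (moeb_denom_ne (by nlinarith [norm_nonneg w, norm_nonneg v]))).differentiableAt
    have hmv : ‖moeb w v‖ < 1 := moeb_abs_lt hw1 hv1
    have h2 : DifferentiableAt ℂ φ (moeb w v) :=
      hφ.differentiableAt (isOpen_ball.mem_nhds (mem_ball_abs.mpr hmv))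
    have hfv : ‖φ (moeb w v)‖ < 1 := mem_ball_abs.mp (hmap (mem_ball_abs.mpr hmv))
    have h3 : DifferentiableAt ℂ (moeb (φ w)) (φ (moeb w v)) :=
      (moeb_hasDerivAt _ _ (moeb_denom_ne (by nlinarith [norm_nonneg (φ w), norm_nonneg (φ (moeb w v))]))).differentiableAt
    exact (((h3.comp _ h2).comp v h1).differentiableWithinAt : _)
  have hψ0 : ψ 0 = 0 := by simp [hψdef, moeb]
  have hψmaps : MapsTo ψ (ball 0 1) (ball 0 1) := by
    intro v hv
    exact mem_ball_abs.mpr (moeb_abs_lt hφw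
      (mem_ball_abs.mp (hmap (mem_ball_abs.mpr (moeb_abs_lt hw1 (mem_ball_abs.mp hv))))))
  set g := dslope ψ 0 with hgdef
  have hgd : DifferentiableOn ℂ g (ball 0 1) :=
    (Complex.differentiableOn_dslope (ball_mem_nhds _ one_pos)).mpr hψd
  have hgle : ∀ v ∈ ball (0:ℂ) 1, ‖g v‖ ≤ 1 := by
    intro v hv
    have h := Complex.norm_dslope_le_div_of_mapsTo_ball hψd (by rw [hψ0]; exact hψmaps.mono_right ball_subset_closedBall) hv
    simpa using h
  -- derivative at 0
  have hden2 : 1 - (starRingEnd ℂ) (φ w) * (φ w) ≠ 0 :=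
    moeb_denom_ne (by nlinarith [norm_nonneg (φ w)])
  have hm0 : moeb w 0 = w := by simp [moeb]
  have hder : HasDerivAt ψ
      ((((starRingEnd ℂ) (φ w) * (φ w) - 1) / (1 - (starRingEnd ℂ) (φ w) * (φ w)) ^ 2) *
        (deriv φ w * ((starRingEnd ℂ) w * w - 1))) 0 := by
    have h1 : HasDerivAt (moeb w) ((starRingEnd ℂ) w * w - 1) 0 := by
      have h := moeb_hasDerivAt w 0 (by simp)
      simpa using h
    have h2 : HasDerivAt φ (deriv φ w) (moeb w 0) := by
      rw [hm0]; exact (hφ.differentiableAt (isOpen_ball.mem_nhds hw)).hasDerivAt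
    have h3 : HasDerivAt (moeb (φ w))
        (((starRingEnd ℂ) (φ w) * (φ w) - 1) / (1 - (starRingEnd ℂ) (φ w) * (φ w)) ^ 2)
        (φ (moeb w 0)) := by
      rw [hm0]; exact moeb_hasDerivAt _ _ hden2
    have h4 := (h3.comp (moeb w 0) h2).comp 0 h1
    refine h4.congr_deriv ?_
    ring
  have hg0deriv : g 0 = (((starRingEnd ℂ) (φ w) * (φ w) - 1) /
      (1 - (starRingEnd ℂ) (φ w) * (φ w)) ^ 2) * (deriv φ w * ((starRingEnd ℂ) w * w - 1)) := by
    rw [hgdef, dslope_same, hder.deriv]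
  have hDh : Dh φ w = ‖g 0‖ := by
    rw [hg0deriv, Dh]
    have e1 : (starRingEnd ℂ) w * w = ((‖w‖ ^ 2 : ℝ) : ℂ) := by
      rw [mul_comm, Complex.mul_conj, Complex.normSq_eq_norm_sq]
    have e2 : (starRingEnd ℂ) (φ w) * (φ w) = ((‖φ w‖ ^ 2 : ℝ) : ℂ) := by
      rw [mul_comm, Complex.mul_conj, Complex.normSq_eq_norm_sq]
    rw [e1, e2, norm_mul, norm_div, norm_pow, norm_mul]
    have c1 : ((‖φ w‖ ^ 2 : ℝ) : ℂ) - 1 = (((‖φ w‖ ^ 2 - 1 : ℝ)) : ℂ) := by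
      push_cast; ring
    have c2 : 1 - ((‖φ w‖ ^ 2 : ℝ) : ℂ) = (((1 - ‖φ w‖ ^ 2 : ℝ)) : ℂ) := by
      push_cast; ring
    have c3 : ((‖w‖ ^ 2 : ℝ) : ℂ) - 1 = (((‖w‖ ^ 2 - 1 : ℝ)) : ℂ) := by
      push_cast; ring
    rw [c1, c2, c3, Complex.norm_real, Complex.norm_real, Complex.norm_real,
    Real.norm_eq_abs, Real.norm_eq_abs, Real.norm_eq_abs]
    rw [abs_of_nonpos (by nlinarith [norm_nonneg (φ w)]),
      abs_of_nonneg (by nlinarith [norm_nonneg (φ w)]),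
      abs_of_nonpos (by nlinarith [norm_nonneg w])]
    have hne : (1 : ℝ) - ‖φ w‖ ^ 2 ≠ 0 := by nlinarith [norm_nonneg (φ w)]
    field_simp
    ring
  -- pseudo-hyperbolic distances
  set u := moeb w z with hudef
  have hρeq : pdist z w = ‖u‖ := by
    rw [pdist, hudef, moeb, norm_div, norm_div, norm_sub_rev]
  have hρ1 : ‖u‖ < 1 := moeb_abs_lt hw1 hz1
  have hρ0 : 0 ≤ ‖u‖ := norm_nonneg u
  have hu : u ∈ ball (0:ℂ) 1 := mem_ball_abs.mpr hρ1
  have hψu : ψ u = u * g u := by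
    have h := sub_smul_dslope ψ 0 u
    rw [hψ0, sub_zero, sub_zero, smul_eq_mul] at h
    exact h.symm
  have hφzw : pdist (φ z) (φ w) = ‖g u‖ * ‖u‖ := by
    have hminv : moeb w u = z := moeb_invol hw1 hz1
    have h5 : ψ u = moeb (φ w) (φ z) := by rw [hψdef]; simp only; rw [hminv]
    have h6 : pdist (φ z) (φ w) = ‖moeb (φ w) (φ z)‖ := by
      rw [pdist, moeb, norm_div, norm_div, norm_sub_rev]
    rw [h6, ← h5, hψu, norm_mul, mul_comm]
  have hc1 : ‖g 0‖ ≤ 1 := hgle 0 (mem_ball_abs.mpr (by norm_num))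
  have ht1 : ‖g u‖ ≤ 1 := hgle u hu
  -- the key bounds
  have hbnds : ‖g 0‖ - ‖u‖ ≤
        ‖g u‖ * (1 - ‖g 0‖ * ‖u‖) ∧
      ‖g u‖ * (1 + ‖g 0‖ * ‖u‖) ≤
        ‖g 0‖ + ‖u‖ := by
    by_cases hcase : ∀ v ∈ ball (0:ℂ) 1, ‖g v‖ < 1
    · have hc1' : ‖g 0‖ < 1 := hcase 0 (mem_ball_abs.mpr (by norm_num))
      have ht1' : ‖g u‖ < 1 := hcase u hu
      have hGd : DifferentiableOn ℂ (fun v => moeb (g 0) (g v)) (ball 0 1) := by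
        intro v hv
        have hgv : ‖g v‖ < 1 := hcase v hv
        have h3 : DifferentiableAt ℂ (moeb (g 0)) (g v) :=
          (moeb_hasDerivAt _ _ (moeb_denom_ne (by nlinarith [norm_nonneg (g 0), norm_nonneg (g v)]))).differentiableAt
        exact h3.comp_differentiableWithinAt v (hgd v hv)
      have hGmaps : MapsTo (fun v => moeb (g 0) (g v)) (ball 0 1) (ball 0 1) := fun v hv =>
        mem_ball_abs.mpr (moeb_abs_lt hc1' (hcase v hv))
      have hG0 : (fun v => moeb (g 0) (g v)) 0 = 0 := by simp [moeb]
      have hSP := Complex.norm_le_norm_of_mapsTo_ball hGd (hGmaps.mono_right ball_subset_closedBall) hG0 hρ1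
      have hSP' : ‖(g u - g 0) / (1 - (starRingEnd ℂ) (g 0) * g u)‖
          ≤ ‖u‖ := by
        have e : (g u - g 0) / (1 - (starRingEnd ℂ) (g 0) * g u) = -(moeb (g 0) (g u)) := by
          rw [moeb]; ring
        rw [e, norm_neg]
        exact hSP
      exact sp_ineq ht1' hc1' hρ0 hρ1 hSP'
    · push_neg at hcase
      obtain ⟨v0, hv0, hv0ge⟩ := hcase
      have hv0eq : ‖g v0‖ = 1 := le_antisymm (hgle v0 hv0) hv0ge
      have hmax : IsMaxOn (norm ∘ g) (ball (0:ℂ) 1) v0 := by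
        intro v hv
        simp only [Function.comp_apply, mem_setOf_eq, hv0eq]
        exact hgle v hv
      have hconst := Complex.eqOn_of_isPreconnected_of_isMaxOn_norm
        (convex_ball (0:ℂ) 1).isPreconnected isOpen_ball hgd hv0 hmax
      have h1 : g u = g v0 := hconst hu
      have h2 : g 0 = g v0 := hconst (mem_ball_abs.mpr (by norm_num))
      rw [h1, h2, hv0eq]
      constructor <;> nlinarith
  have hE := endgame hρ0 hρ1 (norm_nonneg (g 0)) hc1 (norm_nonneg (g u)) ht1
    hbnds.1 hbnds.2
  have hkzw : hdist z w = Real.log ((1 + ‖u‖) / (1 - ‖u‖)) := by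
    rw [hdist, hρeq]
  have hkφ : hdist (φ z) (φ w) =
      Real.log ((1 + ‖g u‖ * ‖u‖) /
        (1 - ‖g u‖ * ‖u‖)) := by
    rw [hdist, hφzw]
  rw [hkzw, hkφ, hDh]
  have p1 : (0:ℝ) < 1 + ‖u‖ := by linarith
  have p2 : (0:ℝ) < 1 - ‖u‖ := by linarith
  have hXpos : (0:ℝ) < (1 + ‖u‖) / (1 - ‖u‖) := div_pos p1 p2
  have he : Real.exp (Real.log ((1 + ‖u‖) / (1 - ‖u‖)))
      = (1 + ‖u‖) / (1 - ‖u‖) := Real.exp_log hXpos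
  have hsinh : Real.sinh (Real.log ((1 + ‖u‖) / (1 - ‖u‖)))
      = ((1 + ‖u‖) / (1 - ‖u‖)
        - ((1 + ‖u‖) / (1 - ‖u‖))⁻¹) / 2 := by
    rw [Real.sinh_eq, Real.exp_neg, he]
  have hL : Real.exp (-(Real.log ((1 + ‖u‖) / (1 - ‖u‖)))) *
      Real.sinh (Real.log ((1 + ‖u‖) / (1 - ‖u‖)))
      = 2 * ‖u‖ / (1 + ‖u‖) ^ 2 := by
    rw [Real.exp_neg, he, hsinh]
    field_simp
    ring
  have hR : Real.exp (Real.log ((1 + ‖u‖) / (1 - ‖u‖))) *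
      Real.sinh (Real.log ((1 + ‖u‖) / (1 - ‖u‖)))
      = 2 * ‖u‖ / (1 - ‖u‖) ^ 2 := by
    rw [he, hsinh]
    field_simp
    ring
  rw [hL, hR]
  exact hE
end

section
/- Let φ : 𝔻 → 𝔻 be holomorphic. Then for all z, w ∈ 𝔻: e^{-2k(z,w)} ≤ (1 - D_h φ(z))/(1 - D_h φ(w)) ≤ e^{2k(z,w)}, whenever D_h φ(w) < 1 (equivalently φ is not an automorphism). -/
open Metric Set

open Complex


local notation "conj'" => starRingEnd ℂ

noncomputable def mo (a z : ℂ) : ℂ := (a - z) / (1 - conj' a * z)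

lemma nsq_key (a u : ℂ) :
    normSq (1 - conj' a * u) - normSq (a - u) = (1 - normSq a) * (1 - normSq u) := by
  simp [normSq_apply, mul_re, mul_im, conj_re, conj_im]
  ring

lemma den_ne {a u : ℂ} (ha : ‖a‖ < 1) (hu : ‖u‖ < 1) :
    1 - conj' a * u ≠ 0 := by
  intro h
  have h2 : ‖conj' a * u‖ < 1 := by
    rw [norm_mul, Complex.norm_conj]; nlinarith [norm_nonneg a, norm_nonneg u]
  rw [sub_eq_zero] at h
  rw [← h] at h2; simp at h2

lemma mo_mem {a u : ℂ} (ha : ‖a‖ < 1) (hu : ‖u‖ < 1) :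
    ‖mo a u‖ < 1 := by
  have hd := den_ne ha hu
  have hdpos : 0 < normSq (1 - conj' a * u) := by
    rwa [normSq_pos]
  have hk := nsq_key a u
  have h1 : normSq a < 1 := by rw [← Complex.sq_norm]; nlinarith [norm_nonneg a]
  have h2 : normSq u < 1 := by rw [← Complex.sq_norm]; nlinarith [norm_nonneg u]
  have : normSq (a - u) < normSq (1 - conj' a * u) := by nlinarith
  have habs : ‖a - u‖ < ‖1 - conj' a * u‖ := by
    have := Complex.sq_norm (a - u)
    have := Complex.sq_norm (1 - conj' a * u)
    nlinarith [norm_nonneg (a - u), norm_nonneg (1 - conj' a * u)]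
  have hpos : 0 < ‖1 - conj' a * u‖ := by
    rw [norm_pos_iff]; exact hd
  rw [mo, norm_div, div_lt_one hpos]
  exact habs

lemma mo_self (a : ℂ) : mo a a = 0 := by simp [mo]

lemma mo_zero (a : ℂ) : mo a 0 = a := by simp [mo]

lemma mo_mo {a u : ℂ} (ha : ‖a‖ < 1) (hu : ‖u‖ < 1) :
    mo a (mo a u) = u := by
  have hd := den_ne ha hu
  have hd2 : 1 - conj' a * a ≠ 0 := den_ne ha ha
  rw [mo, mo]
  have key : 1 - conj' a * ((a - u) / (1 - conj' a * u))
      = (1 - conj' a * a) / (1 - conj' a * u) := by field_simp; ring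
  have key2 : a - (a - u) / (1 - conj' a * u) = u * (1 - conj' a * a) / (1 - conj' a * u) := by
    rw [eq_div_iff hd, sub_mul, div_mul_cancel₀ _ hd]; ring
  rw [key, key2, div_div_div_eq, div_eq_iff (by exact mul_ne_zero hd hd2)]
  ring

lemma mo_hasDerivAt {a u : ℂ} (hd : 1 - conj' a * u ≠ 0) :
    HasDerivAt (mo a) ((conj' a * a - 1) / (1 - conj' a * u) ^ 2) u := by
  have h1 : HasDerivAt (fun z : ℂ => a - z) (-1) u := by
    simpa using (hasDerivAt_id u).const_sub a
  have h2 : HasDerivAt (fun z : ℂ => 1 - conj' a * z) (-(conj' a)) u := by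
    simpa using ((hasDerivAt_id u).const_mul (conj' a)).const_sub 1
  have := h1.div h2 hd
  exact (show HasDerivAt (mo a) _ u from this).congr_deriv (by ring)

lemma mo_deriv {a u : ℂ} (hd : 1 - conj' a * u ≠ 0) :
    deriv (mo a) u = (conj' a * a - 1) / (1 - conj' a * u) ^ 2 :=
  (mo_hasDerivAt hd).deriv

lemma mo_diffAt {a u : ℂ} (hd : 1 - conj' a * u ≠ 0) : DifferentiableAt ℂ (mo a) u :=
  (mo_hasDerivAt hd).differentiableAt

lemma mo_diffOn {a : ℂ} (ha : ‖a‖ < 1) :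
    DifferentiableOn ℂ (mo a) (ball (0:ℂ) 1) := fun u hu =>
  (mo_diffAt (den_ne ha (by simpa [mem_ball_zero_iff] using hu))).differentiableWithinAt

lemma mo_mapsTo {a : ℂ} (ha : ‖a‖ < 1) :
    MapsTo (mo a) (ball (0:ℂ) 1) (ball (0:ℂ) 1) := fun u hu => by
  rw [mem_ball_zero_iff] at hu ⊢
  simpa using mo_mem ha hu

-- 1 - |mo a u|^2 identity
lemma one_sub_mo_sq {a u : ℂ} (ha : ‖a‖ < 1) (hu : ‖u‖ < 1) :
    1 - ‖mo a u‖ ^ 2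
      = (1 - ‖a‖ ^ 2) * (1 - ‖u‖ ^ 2) / ‖1 - conj' a * u‖ ^ 2 := by
  have hd := den_ne ha hu
  have hpos : (0:ℝ) < ‖1 - conj' a * u‖ ^ 2 := by
    have : 0 < ‖1 - conj' a * u‖ := norm_pos_iff.mpr hd
    positivity
  rw [eq_div_iff hpos.ne']
  have h1 : ‖mo a u‖ ^ 2 * ‖1 - conj' a * u‖ ^ 2
      = ‖a - u‖ ^ 2 := by
    rw [mo, norm_div, div_pow, div_mul_cancel₀]
    exact hpos.ne'
  have := nsq_key a u
  rw [← Complex.sq_norm, ← Complex.sq_norm, ← Complex.sq_norm, ← Complex.sq_norm] at this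
  nlinarith [this, h1]

lemma abs_deriv_mo {a u : ℂ} (ha : ‖a‖ < 1) (hu : ‖u‖ < 1) :
    ‖deriv (mo a) u‖
      = (1 - ‖a‖ ^ 2) / ‖1 - conj' a * u‖ ^ 2 := by
  rw [mo_deriv (den_ne ha hu), norm_div, norm_pow]
  congr 1
  have : conj' a * a - 1 = ((normSq a - 1 : ℝ) : ℂ) := by
    rw [mul_comm, Complex.mul_conj]
    push_cast
    ring
  rw [this, Complex.norm_real, Real.norm_eq_abs, ← Complex.sq_norm, abs_of_nonpos (by nlinarith [norm_nonneg a])]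
  ring

lemma Dh_nonneg (φ : ℂ → ℂ) {z : ℂ} (hz : ‖z‖ < 1) (hfz : ‖φ z‖ < 1) :
    0 ≤ Dh φ z := by
  rw [Dh]
  have h1 : (0:ℝ) ≤ 1 - ‖z‖ ^ 2 := by nlinarith [norm_nonneg z]
  have h2 : (0:ℝ) < 1 - ‖φ z‖ ^ 2 := by nlinarith [norm_nonneg (φ z)]
  positivity

lemma Dh_comp (f g : ℂ → ℂ) (ζ : ℂ) (hg : DifferentiableAt ℂ g ζ)
    (hf : DifferentiableAt ℂ f (g ζ))
    (h1 : ‖g ζ‖ < 1) (h2 : ‖f (g ζ)‖ < 1) :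
    Dh (f ∘ g) ζ = Dh f (g ζ) * Dh g ζ := by
  have hc : deriv (f ∘ g) ζ = deriv f (g ζ) * deriv g ζ := deriv_comp ζ hf hg
  have d1 : (1:ℝ) - ‖g ζ‖ ^ 2 ≠ 0 := by nlinarith [norm_nonneg (g ζ)]
  have d2 : (1:ℝ) - ‖f (g ζ)‖ ^ 2 ≠ 0 := by nlinarith [norm_nonneg (f (g ζ))]
  simp only [Dh, Function.comp_apply, hc, norm_mul]
  field_simp

lemma Dh_mo {a u : ℂ} (ha : ‖a‖ < 1) (hu : ‖u‖ < 1) :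
    Dh (mo a) u = 1 := by
  have hd := den_ne ha hu
  have hpos : (0:ℝ) < ‖1 - conj' a * u‖ ^ 2 := by
    have : 0 < ‖1 - conj' a * u‖ := norm_pos_iff.mpr hd
    positivity
  have ha2 : (0:ℝ) < 1 - ‖a‖ ^ 2 := by nlinarith [norm_nonneg a]
  have hu2 : (0:ℝ) < 1 - ‖u‖ ^ 2 := by nlinarith [norm_nonneg u]
  rw [Dh, abs_deriv_mo ha hu, one_sub_mo_sq ha hu]
  field_simp

-- composition ψ = mo (φ w) ∘ φ ∘ mo w
section SP
variable {φ : ℂ → ℂ} {w : ℂ}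

lemma psi_diffOn (hφ : DifferentiableOn ℂ φ (ball (0:ℂ) 1))
    (hmap : MapsTo φ (ball (0:ℂ) 1) (ball (0:ℂ) 1)) (hw : w ∈ ball (0:ℂ) 1) :
    DifferentiableOn ℂ (mo (φ w) ∘ φ ∘ mo w) (ball (0:ℂ) 1) := by
  rw [mem_ball_zero_iff] at hw
  have h1 : ‖φ w‖ < 1 := by
    simpa [mem_ball_zero_iff] using hmap (by simpa [mem_ball_zero_iff] using hw)
  exact ((mo_diffOn h1).comp (hφ.comp (mo_diffOn hw) (mo_mapsTo hw))
    (hmap.comp (mo_mapsTo hw)))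

lemma psi_mapsTo (hmap : MapsTo φ (ball (0:ℂ) 1) (ball (0:ℂ) 1)) (hw : w ∈ ball (0:ℂ) 1) :
    MapsTo (mo (φ w) ∘ φ ∘ mo w) (ball (0:ℂ) 1) (ball (0:ℂ) 1) := by
  rw [mem_ball_zero_iff] at hw
  have h1 : ‖φ w‖ < 1 := by
    simpa [mem_ball_zero_iff] using hmap (by simpa [mem_ball_zero_iff] using hw)
  exact (mo_mapsTo h1).comp ((hmap.comp (mo_mapsTo hw)))

lemma psi_zero (w : ℂ) : (mo (φ w) ∘ φ ∘ mo w) 0 = 0 := by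
  simp [Function.comp_apply, mo_zero, mo_self]

end SP

lemma Dh_psi (φ : ℂ → ℂ) (hφ : DifferentiableOn ℂ φ (ball (0:ℂ) 1))
    (hmap : MapsTo φ (ball (0:ℂ) 1) (ball (0:ℂ) 1))
    {w ζ : ℂ} (hw : w ∈ ball (0:ℂ) 1) (hζ : ζ ∈ ball (0:ℂ) 1) :
    Dh (mo (φ w) ∘ φ ∘ mo w) ζ = Dh φ (mo w ζ) := by
  rw [mem_ball_zero_iff] at hw hζ
  have hb : ‖φ w‖ < 1 := by
    simpa [mem_ball_zero_iff] using hmap (by simpa [mem_ball_zero_iff] using hw)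
  have hmoζ : ‖mo w ζ‖ < 1 := mo_mem hw hζ
  have hφm : ‖φ (mo w ζ)‖ < 1 := by
    simpa [mem_ball_zero_iff] using hmap (by simpa [mem_ball_zero_iff] using hmoζ)
  have dmo : DifferentiableAt ℂ (mo w) ζ := mo_diffAt (den_ne hw hζ)
  have dφ : DifferentiableAt ℂ φ (mo w ζ) :=
    hφ.differentiableAt (isOpen_ball.mem_nhds (by simpa [mem_ball_zero_iff] using hmoζ))
  have dcomp : DifferentiableAt ℂ (φ ∘ mo w) ζ := dφ.comp ζ dmo
  have h1 : ‖(φ ∘ mo w) ζ‖ < 1 := hφm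
  have h2 : ‖mo (φ w) ((φ ∘ mo w) ζ)‖ < 1 := mo_mem hb hφm
  have dmob : DifferentiableAt ℂ (mo (φ w)) ((φ ∘ mo w) ζ) :=
    mo_diffAt (den_ne hb hφm)
  rw [Dh_comp (mo (φ w)) (φ ∘ mo w) ζ dcomp dmob h1 h2,
    Dh_comp φ (mo w) ζ dmo dφ hmoζ hφm]
  have e1 : Dh (mo (φ w)) ((φ ∘ mo w) ζ) = 1 := Dh_mo hb hφm
  have e2 : Dh (mo w) ζ = 1 := Dh_mo hw hζ
  rw [e1, e2]
  simp [Function.comp_apply]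

lemma SP1 (φ : ℂ → ℂ) (hφ : DifferentiableOn ℂ φ (ball (0:ℂ) 1))
    (hmap : MapsTo φ (ball (0:ℂ) 1) (ball (0:ℂ) 1))
    {z : ℂ} (hz : z ∈ ball (0:ℂ) 1) : Dh φ z ≤ 1 := by
  have hMT : MapsTo (mo (φ z) ∘ φ ∘ mo z) (ball (0:ℂ) 1)
      (ball ((mo (φ z) ∘ φ ∘ mo z) 0) 1) := by
    rw [psi_zero]; exact psi_mapsTo hmap hz
  have hder : ‖deriv (mo (φ z) ∘ φ ∘ mo z) 0‖ ≤ 1 := by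
    simpa using Complex.norm_deriv_le_div_of_mapsTo_ball (psi_diffOn hφ hmap hz) (hMT.mono_right ball_subset_closedBall) one_pos
  have hD : Dh (mo (φ z) ∘ φ ∘ mo z) 0 = ‖deriv (mo (φ z) ∘ φ ∘ mo z) 0‖ := by
    rw [Dh, psi_zero]; simp
  have h := Dh_psi φ hφ hmap hz (mem_ball_self one_pos)
  rw [mo_zero] at h
  rw [← h, hD]
  exact hder

lemma SP2 (φ : ℂ → ℂ) (hφ : DifferentiableOn ℂ φ (ball (0:ℂ) 1))
    (hmap : MapsTo φ (ball (0:ℂ) 1) (ball (0:ℂ) 1))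
    {z w : ℂ} (hz : z ∈ ball (0:ℂ) 1) (hw : w ∈ ball (0:ℂ) 1) :
    pdist (φ z) (φ w) ≤ pdist z w := by
  have hz' : ‖z‖ < 1 := by simpa [mem_ball_zero_iff] using hz
  have hw' : ‖w‖ < 1 := by simpa [mem_ball_zero_iff] using hw
  have hb : ‖φ w‖ < 1 := by
    simpa [mem_ball_zero_iff] using hmap hw
  have hMT : MapsTo (mo (φ w) ∘ φ ∘ mo w) (ball (0:ℂ) 1)
      (ball ((mo (φ w) ∘ φ ∘ mo w) 0) 1) := by
    rw [psi_zero]; exact psi_mapsTo hmap hw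
  have hζ : ‖mo w z‖ < 1 := mo_mem hw' hz'
  have key := Complex.dist_le_div_mul_dist_of_mapsTo_ball
    (psi_diffOn hφ hmap hw) (hMT.mono_right ball_subset_closedBall) (z := mo w z) (by simpa [mem_ball_zero_iff] using hζ)
  rw [psi_zero] at key
  have hψζ : (mo (φ w) ∘ φ ∘ mo w) (mo w z) = mo (φ w) (φ z) := by
    simp only [Function.comp_apply, mo_mo hw' hz']
  rw [hψζ] at key
  simp only [dist_zero_right, one_div, div_one, one_mul] at key
  have k1 : ‖mo (φ w) (φ z)‖ = pdist (φ z) (φ w) := by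
    rw [mo, pdist, norm_div, norm_div]
    congr 1
    rw [← norm_neg]; congr 1; ring
  have k2 : ‖mo w z‖ = pdist z w := by
    rw [mo, pdist, norm_div, norm_div]
    congr 1
    rw [← norm_neg]; congr 1; ring
  rwa [k1, k2] at key

lemma pdist_zero_right (z : ℂ) : pdist z 0 = ‖z‖ := by
  simp [pdist]

lemma abs_sub_le_pdist {u v : ℂ} (hu : ‖u‖ < 1) (hv : ‖v‖ < 1) :
    |‖u‖ - ‖v‖| ≤ pdist u v * (1 - ‖u‖ * ‖v‖) := by
  set A := ‖u‖ with hA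
  set B := ‖v‖ with hB
  have hA0 : 0 ≤ A := norm_nonneg u
  have hB0 : 0 ≤ B := norm_nonneg v
  have hdne : 1 - conj' v * u ≠ 0 := den_ne hv hu
  have hdpos : 0 < ‖1 - conj' v * u‖ := norm_pos_iff.mpr hdne
  set d := ‖1 - conj' v * u‖ with hd
  set t := (conj' v * u).re with htdef
  have ht : t ≤ A * B := by
    calc t ≤ ‖conj' v * u‖ := Complex.re_le_norm _
    _ = B * A := by rw [norm_mul, Complex.norm_conj]
    _ = A * B := mul_comm _ _
  have e1 : normSq (u - v) = A ^ 2 + B ^ 2 - 2 * t := by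
    rw [hA, hB, Complex.sq_norm, Complex.sq_norm, htdef]
    simp [normSq_apply, mul_re, mul_im, conj_re, conj_im]
    ring
  have e2 : normSq (1 - conj' v * u) = 1 + A ^ 2 * B ^ 2 - 2 * t := by
    rw [hA, hB, Complex.sq_norm, Complex.sq_norm, htdef]
    simp [normSq_apply, mul_re, mul_im, conj_re, conj_im]
    ring
  have hd2 : d ^ 2 = 1 + A ^ 2 * B ^ 2 - 2 * t := by rw [hd, Complex.sq_norm, e2]
  have huv2 : ‖u - v‖ ^ 2 = A ^ 2 + B ^ 2 - 2 * t := by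
    rw [Complex.sq_norm, e1]
  have hAB : 0 ≤ 1 - A * B := by nlinarith
  have hsq : (|A - B| * d) ^ 2 ≤ (‖u - v‖ * (1 - A * B)) ^ 2 := by
    rw [mul_pow, mul_pow, _root_.sq_abs, hd2, huv2]
    nlinarith [mul_nonneg (sub_nonneg.2 ht) (mul_nonneg (by nlinarith : (0:ℝ) ≤ 1 - A^2) (by nlinarith : (0:ℝ) ≤ 1 - B^2))]
  have hmain : |A - B| * d ≤ ‖u - v‖ * (1 - A * B) := by
    have hx : 0 ≤ |A - B| * d := by positivity
    have hy : 0 ≤ ‖u - v‖ * (1 - A * B) := by positivity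
    nlinarith [hsq, hx, hy]
  have hp : pdist u v = ‖u - v‖ / d := by
    rw [pdist, norm_div]
  rw [hp, div_mul_eq_mul_div, le_div_iff₀ hdpos]
  linarith [hmain]

lemma realAlg {a b r D : ℝ} (ha0 : 0 ≤ a) (ha1 : a < 1) (hb0 : 0 ≤ b) (hb1 : b < 1)
    (hr0 : 0 ≤ r) (hr1 : r < 1) (hD0 : 0 ≤ D) (hD1 : D ≤ 1)
    (h1 : D * (1 + a * r) ≤ a + r) (h2 : a - r ≤ D * (1 - a * r))
    (h3 : a * (1 + b * r) ≤ b + r) (h4 : b - r * (1 - a * b) ≤ a) :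
    (1 - b) * (1 - r) ^ 2 ≤ (1 - D) * (1 + r) ^ 2
    ∧ (1 - D) * (1 - r) ^ 2 ≤ (1 - b) * (1 + r) ^ 2 := by
  have m1 : (0:ℝ) ≤ r - a * r := by nlinarith
  have m2 : (0:ℝ) ≤ r - b * r := by nlinarith
  have q1 : (1 - a) * (1 - r) ≤ (1 - D) * (1 + r) := by
    nlinarith [mul_nonneg (by linarith : (0:ℝ) ≤ 1 - D) m1]
  have q2 : (1 - b) * (1 - r) ≤ (1 - a) * (1 + r) := by
    nlinarith [mul_nonneg (by linarith : (0:ℝ) ≤ 1 - a) m2]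
  have q3 : (1 - D) * (1 - r) ≤ (1 - a) * (1 + r) := by
    nlinarith [mul_nonneg (by linarith : (0:ℝ) ≤ 1 - D) m1]
  have q4 : (1 - a) * (1 - r) ≤ (1 - b) * (1 + r) := by
    nlinarith [mul_nonneg (by linarith : (0:ℝ) ≤ 1 - a) m2]
  constructor
  · nlinarith [mul_le_mul_of_nonneg_right q2 (by linarith : (0:ℝ) ≤ 1 - r),
      mul_le_mul_of_nonneg_right q1 (by linarith : (0:ℝ) ≤ 1 + r)]
  · nlinarith [mul_le_mul_of_nonneg_right q3 (by linarith : (0:ℝ) ≤ 1 - r),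
      mul_le_mul_of_nonneg_right q4 (by linarith : (0:ℝ) ≤ 1 + r)]

set_option maxHeartbeats 1000000 in
lemma key_normalized (ψ : ℂ → ℂ) (hψd : DifferentiableOn ℂ ψ (ball (0:ℂ) 1))
    (hψm : MapsTo ψ (ball (0:ℂ) 1) (ball (0:ℂ) 1)) (hψ0 : ψ 0 = 0)
    {ζ : ℂ} (hζ : ζ ∈ ball (0:ℂ) 1) (hbb : Dh ψ 0 < 1) :
    (1 - Dh ψ 0) * (1 - ‖ζ‖) ^ 2 ≤ (1 - Dh ψ ζ) * (1 + ‖ζ‖) ^ 2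
    ∧ (1 - Dh ψ ζ) * (1 - ‖ζ‖) ^ 2 ≤ (1 - Dh ψ 0) * (1 + ‖ζ‖) ^ 2 := by
  have hζ' : ‖ζ‖ < 1 := by simpa [mem_ball_zero_iff] using hζ
  set r := ‖ζ‖ with hrdef
  have hr0 : 0 ≤ r := norm_nonneg ζ
  set g := dslope ψ 0 with hgdef
  have hMT : MapsTo ψ (ball (0:ℂ) 1) (ball (ψ 0) 1) := by rw [hψ0]; exact hψm
  have hg_diff : DifferentiableOn ℂ g (ball (0:ℂ) 1) :=
    (differentiableOn_dslope (ball_mem_nhds _ one_pos)).mpr hψd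
  have hg_le : ∀ x ∈ ball (0:ℂ) 1, ‖g x‖ ≤ 1 := fun x hx => by
    simpa using Complex.norm_dslope_le_div_of_mapsTo_ball hψd (hMT.mono_right ball_subset_closedBall) hx
  have hg0 : g 0 = deriv ψ 0 := dslope_same ψ 0
  have hb_eq : Dh ψ 0 = ‖deriv ψ 0‖ := by rw [Dh, hψ0]; simp
  set b := Dh ψ 0 with hbdef
  have hb0 : 0 ≤ b := hb_eq ▸ norm_nonneg _
  have habsg0 : ‖g 0‖ = b := by rw [hg0, hb_eq]
  -- strict bound |g| < 1 on the ball
  have hg_lt : ∀ x ∈ ball (0:ℂ) 1, ‖g x‖ < 1 := by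
    intro x hx
    rcases lt_or_eq_of_le (hg_le x hx) with h | h
    · exact h
    · exfalso
      have hmax : IsMaxOn (norm ∘ g) (ball (0:ℂ) 1) x := fun y hy => by
        simp only [Function.comp_apply, mem_setOf_eq, h]
        exact hg_le y hy
      have := Complex.eqOn_of_isPreconnected_of_isMaxOn_norm
        (convex_ball (0:ℂ) 1).isPreconnected isOpen_ball hg_diff hx hmax
        (mem_ball_self one_pos)
      have : ‖g 0‖ = 1 := by rw [this]; exact h
      rw [habsg0] at this
      exact absurd this (by linarith)
  have hg_maps : MapsTo g (ball (0:ℂ) 1) (ball (0:ℂ) 1) := fun x hx => by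
    rw [mem_ball_zero_iff]; simpa using hg_lt x hx
  set a := ‖g ζ‖ with hadef
  have ha1 : a < 1 := hg_lt ζ hζ
  have ha0 : 0 ≤ a := norm_nonneg _
  have hb1 : b < 1 := hbb
  -- ψ x = x * g x
  have hψ_eq : ψ = fun x => x * g x := by
    funext x
    have := sub_smul_dslope ψ 0 x
    rw [hψ0, sub_zero, sub_zero, smul_eq_mul] at this
    rw [← this, hgdef]
  have hgζdiff : DifferentiableAt ℂ g ζ := hg_diff.differentiableAt (isOpen_ball.mem_nhds hζ)
  have hder : deriv ψ ζ = g ζ + ζ * deriv g ζ := by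
    have h1 : HasDerivAt (fun x : ℂ => x * g x) (1 * g ζ + ζ * deriv g ζ) ζ :=
      (hasDerivAt_id ζ).mul hgζdiff.hasDerivAt
    rw [hψ_eq, h1.deriv, one_mul]
  -- Schwarz-Pick for g (derivative form)
  have hSP1 : (1 - r ^ 2) * ‖deriv g ζ‖ ≤ 1 - a ^ 2 := by
    have h := SP1 g hg_diff hg_maps hζ
    rw [Dh] at h
    have hpos : (0:ℝ) < 1 - a ^ 2 := by nlinarith
    rw [div_le_one hpos] at h
    exact h
  -- Schwarz-Pick for g (distance form)
  have hSP2 : |a - b| ≤ r * (1 - a * b) := by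
    have h := SP2 g hg_diff hg_maps hζ (mem_ball_self one_pos)
    rw [pdist_zero_right] at h
    have h2 := abs_sub_le_pdist (hg_lt ζ hζ) (hg_lt 0 (mem_ball_self one_pos))
    rw [habsg0] at h2
    have hab : (0:ℝ) ≤ 1 - a * b := by nlinarith
    calc |a - b| ≤ pdist (g ζ) (g 0) * (1 - a * b) := h2
      _ ≤ r * (1 - a * b) := by
        apply mul_le_mul_of_nonneg_right _ hab
        exact h
  set D := Dh ψ ζ with hDdef
  have hψζ : ‖ψ ζ‖ = r * a := by
    rw [hψ_eq]; simp [norm_mul, hrdef, hadef]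
  have hra : r * a < 1 := by nlinarith [mul_nonneg hr0 ha0]
  have hne' : (0:ℝ) < 1 - r ^ 2 * a ^ 2 := by nlinarith [mul_nonneg hr0 ha0]
  have hne : (1:ℝ) - r ^ 2 * a ^ 2 ≠ 0 := ne_of_gt hne'
  have hDval : D * (1 - r ^ 2 * a ^ 2) = (1 - r ^ 2) * ‖g ζ + ζ * deriv g ζ‖ := by
    rw [hDdef, Dh, hder, hψζ, mul_pow, ← hrdef]
    exact div_mul_cancel₀ _ hne
  have habs_ub : ‖g ζ + ζ * deriv g ζ‖ ≤ a + r * ‖deriv g ζ‖ := by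
    calc ‖g ζ + ζ * deriv g ζ‖ ≤ ‖g ζ‖ + ‖ζ * deriv g ζ‖ :=
        norm_add_le _ _
      _ = a + r * ‖deriv g ζ‖ := by rw [norm_mul]
  have habs_lb : a - r * ‖deriv g ζ‖ ≤ ‖g ζ + ζ * deriv g ζ‖ := by
    have h5 : ‖g ζ‖ ≤ ‖g ζ + ζ * deriv g ζ‖
        + ‖ζ * deriv g ζ‖ := by
      have := norm_add_le (g ζ + ζ * deriv g ζ) (-(ζ * deriv g ζ))
      simpa using this
    rw [norm_mul] at h5
    rw [hadef]
    linarith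
  have hgd0 : 0 ≤ ‖deriv g ζ‖ := norm_nonneg _
  have hr2 : (0:ℝ) ≤ 1 - r ^ 2 := by nlinarith
  have hI : D * (1 - r ^ 2 * a ^ 2) ≤ (1 - r ^ 2) * a + r * (1 - a ^ 2) := by
    rw [hDval]
    have u1 := mul_le_mul_of_nonneg_left habs_ub hr2
    have u2 := mul_le_mul_of_nonneg_left hSP1 hr0
    nlinarith [u1, u2]
  have hII : (1 - r ^ 2) * a - r * (1 - a ^ 2) ≤ D * (1 - r ^ 2 * a ^ 2) := by
    rw [hDval]
    have u1 := mul_le_mul_of_nonneg_left habs_lb hr2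
    have u2 := mul_le_mul_of_nonneg_left hSP1 hr0
    nlinarith [u1, u2]
  have hD1 : D ≤ 1 := SP1 ψ hψd hψm hζ
  have hD0 : 0 ≤ D := Dh_nonneg ψ hζ' (by simpa [mem_ball_zero_iff] using hψm hζ)
  -- algebra
  have har : 0 < 1 - a * r := by nlinarith
  have h1 : D * (1 + a * r) ≤ a + r :=
    le_of_mul_le_mul_right (by ring_nf; ring_nf at hI; linarith : D * (1 + a * r) * (1 - a * r) ≤ (a + r) * (1 - a * r)) har
  have h2 : a - r ≤ D * (1 - a * r) := by
    have hpos : (0:ℝ) < 1 + a * r := by nlinarith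
    exact le_of_mul_le_mul_right (by ring_nf; ring_nf at hII; linarith : (a - r) * (1 + a * r) ≤ D * (1 - a * r) * (1 + a * r)) hpos
  have h3 : a * (1 + b * r) ≤ b + r := by
    have := (abs_le.mp hSP2).2
    nlinarith
  have h4 : b - r * (1 - a * b) ≤ a := by
    have := (abs_le.mp hSP2).1
    nlinarith
  exact realAlg ha0 ha1 hb0 hb1 hr0 hζ' hD0 hD1 h1 h2 h3 h4

lemma pdist_eq_abs_mo {z w : ℂ} : pdist z w = ‖mo w z‖ := by
  rw [mo, pdist, norm_div, norm_div]
  congr 1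
  rw [← norm_neg]; congr 1; ring

theorem golusin_quotient_estimate (φ : ℂ → ℂ)
    (hφ : DifferentiableOn ℂ φ (ball (0:ℂ) 1))
    (hmap : MapsTo φ (ball (0:ℂ) 1) (ball (0:ℂ) 1)) :
    ∀ z ∈ ball (0:ℂ) 1, ∀ w ∈ ball (0:ℂ) 1, Dh φ w < 1 →
      Real.exp (-(2 * hdist z w)) ≤ (1 - Dh φ z) / (1 - Dh φ w)
      ∧ (1 - Dh φ z) / (1 - Dh φ w) ≤ Real.exp (2 * hdist z w) := by
  intro z hz w hw hDw
  have hz' : ‖z‖ < 1 := by simpa [mem_ball_zero_iff] using hz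
  have hw' : ‖w‖ < 1 := by simpa [mem_ball_zero_iff] using hw
  have hζ' : ‖mo w z‖ < 1 := mo_mem hw' hz'
  have hζ : mo w z ∈ ball (0:ℂ) 1 := by simpa [mem_ball_zero_iff] using hζ'
  set p := pdist z w with hpdef
  have hp_eq : p = ‖mo w z‖ := pdist_eq_abs_mo
  have hp0 : 0 ≤ p := hp_eq ▸ norm_nonneg _
  have hp1 : p < 1 := hp_eq ▸ hζ'
  -- transfer Dh via the normalized map
  have hDz : Dh φ z = Dh (mo (φ w) ∘ φ ∘ mo w) (mo w z) := by
    rw [Dh_psi φ hφ hmap hw hζ, mo_mo hw' hz']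
  have hDw_eq : Dh φ w = Dh (mo (φ w) ∘ φ ∘ mo w) 0 := by
    rw [Dh_psi φ hφ hmap hw (mem_ball_self one_pos), mo_zero]
  have hbb : Dh (mo (φ w) ∘ φ ∘ mo w) 0 < 1 := hDw_eq ▸ hDw
  have hkey := key_normalized (mo (φ w) ∘ φ ∘ mo w) (psi_diffOn hφ hmap hw)
    (psi_mapsTo hmap hw) (psi_zero w) hζ hbb
  rw [← hDz, ← hDw_eq, ← hp_eq] at hkey
  obtain ⟨hA, hB⟩ := hkey
  -- positivity facts
  have hDz1 : Dh φ z ≤ 1 := SP1 φ hφ hmap hz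
  have h1Dw : 0 < 1 - Dh φ w := by linarith
  have h1Dz : 0 ≤ 1 - Dh φ z := by linarith
  have hden : (0:ℝ) < 1 - p := by linarith
  have hnum : (0:ℝ) < 1 + p := by linarith
  set t := (1 + p) / (1 - p) with htdef
  have ht0 : 0 < t := by positivity
  have hexp : Real.exp (2 * hdist z w) = t ^ 2 := by
    rw [hdist, ← hpdef, ← htdef]
    rw [show (2:ℝ) * Real.log t = Real.log (t ^ 2) by
      rw [Real.log_pow]; push_cast; ring]
    exact Real.exp_log (by positivity)
  have hexp' : Real.exp (-(2 * hdist z w)) = (t ^ 2)⁻¹ := by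
    rw [Real.exp_neg, hexp]
  have ht2 : t ^ 2 = (1 + p) ^ 2 / (1 - p) ^ 2 := by rw [htdef, div_pow]
  constructor
  · have hinv : (t ^ 2)⁻¹ = (1 - p) ^ 2 / (1 + p) ^ 2 := by
      rw [htdef]
      field_simp
    rw [hexp', hinv, div_le_div_iff₀ (by positivity) h1Dw]
    nlinarith [hA]
  · rw [hexp, ht2]
    rw [div_le_div_iff₀ h1Dw (by positivity)]
    nlinarith [hB]
end

section
/- Let φ : 𝔻 → 𝔻 be holomorphic and suppose ∫₀¹ (1 - D_h φ(r)) · λ(r) dr < +∞, where λ(r) = 2/(1-r²). Then for every R ∈ (0,1), ∫_R¹ (1 - D_h φ(r)) λ(r) dr ≥ (1 - D_h φ(R))/2. Consequently D_h φ(r) → 1 as r → 1⁻. -/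
open Metric Set MeasureTheory Filter

noncomputable def mob (c z : ℂ) : ℂ := (c - z) / (1 - (starRingEnd ℂ) c * z)

lemma mob_denom_ne (c z : ℂ) (hc : ‖c‖ < 1) (hz : ‖z‖ < 1) :
    1 - (starRingEnd ℂ) c * z ≠ 0 := by
  intro h
  have : ‖(starRingEnd ℂ) c * z‖ < 1 := by
    rw [norm_mul, Complex.norm_conj]
    nlinarith [norm_nonneg c, norm_nonneg z]
  have h1 : (starRingEnd ℂ) c * z = 1 := by linear_combination -h
  rw [h1] at this; simp at this

lemma mob_normSq_identity (c z : ℂ) :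
    Complex.normSq (1 - (starRingEnd ℂ) c * z) - Complex.normSq (c - z)
      = (1 - Complex.normSq c) * (1 - Complex.normSq z) := by
  have h : ∀ w : ℂ, (Complex.normSq w : ℂ) = w * (starRingEnd ℂ) w := by
    intro w; rw [Complex.mul_conj]
  have := h (1 - (starRingEnd ℂ) c * z)
  have h2 := h (c - z)
  have h3 := h c
  have h4 := h z
  have key : ((Complex.normSq (1 - (starRingEnd ℂ) c * z) - Complex.normSq (c - z) : ℝ) : ℂ)
      = ((1 - Complex.normSq c) * (1 - Complex.normSq z) : ℝ) := by
    push_cast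
    rw [this, h2, h3, h4]
    simp only [map_sub, map_mul, map_one, Complex.conj_conj]
    ring
  exact_mod_cast key

lemma mob_mem_ball (c z : ℂ) (hc : ‖c‖ < 1) (hz : ‖z‖ < 1) :
    mob c z ∈ ball (0:ℂ) 1 := by
  rw [mem_ball_zero_iff]
  rw [mob]
  rw [norm_div]
  have hd := mob_denom_ne c z hc hz
  have hdp : 0 < ‖1 - (starRingEnd ℂ) c * z‖ := by
    simpa [norm_pos_iff] using hd
  rw [div_lt_one hdp]
  have h1 : Complex.normSq (c - z) < Complex.normSq (1 - (starRingEnd ℂ) c * z) := by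
    have := mob_normSq_identity c z
    have hc' : Complex.normSq c < 1 := by rw [← Complex.sq_norm]; nlinarith [norm_nonneg c]
    have hz' : Complex.normSq z < 1 := by rw [← Complex.sq_norm]; nlinarith [norm_nonneg z]
    nlinarith
  have := Real.sqrt_lt_sqrt (Complex.normSq_nonneg _) h1
  simpa [Complex.norm_def] using this

lemma mob_self (c : ℂ) : mob c c = 0 := by simp [mob]

lemma mob_invol (c z : ℂ) (hc : ‖c‖ < 1) (hz : ‖z‖ < 1) :
    mob c (mob c z) = z := by
  have hd := mob_denom_ne c z hc hz
  have hcc : 1 - (starRingEnd ℂ) c * c ≠ 0 := mob_denom_ne c c hc hc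
  rw [mob, mob]
  have hcc' : 1 - c * (starRingEnd ℂ) c ≠ 0 := by rwa [mul_comm ((starRingEnd ℂ) c)] at hcc
  have e1 : 1 - (starRingEnd ℂ) c * ((c - z) / (1 - (starRingEnd ℂ) c * z))
      = (1 - (starRingEnd ℂ) c * c) / (1 - (starRingEnd ℂ) c * z) := by
    rw [eq_div_iff hd, sub_mul, mul_assoc, div_mul_cancel₀ _ hd]; ring
  have e2 : c - (c - z) / (1 - (starRingEnd ℂ) c * z)
      = z * (1 - (starRingEnd ℂ) c * c) / (1 - (starRingEnd ℂ) c * z) := by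
    rw [eq_div_iff hd, sub_mul, div_mul_cancel₀ _ hd]; ring
  rw [e1, e2, div_div_div_cancel_right₀ hd, mul_div_assoc, div_self hcc, mul_one]


lemma mob_diff (c : ℂ) (hc : ‖c‖ < 1) :
    DifferentiableOn ℂ (mob c) (ball (0:ℂ) 1) := by
  apply DifferentiableOn.div
  · exact (differentiableOn_const c).sub differentiableOn_id
  · exact (differentiableOn_const 1).sub ((differentiableOn_const _).mul differentiableOn_id)
  · intro z hz
    exact mob_denom_ne c z hc (by simpa using mem_ball_zero_iff.1 hz)

/-- Schwarz–Pick lemma, pseudo-hyperbolic form. -/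
lemma schwarz_pick (g : ℂ → ℂ) (hg : DifferentiableOn ℂ g (ball (0:ℂ) 1))
    (hmap : MapsTo g (ball (0:ℂ) 1) (ball (0:ℂ) 1)) (z w : ℂ)
    (hz : z ∈ ball (0:ℂ) 1) (hw : w ∈ ball (0:ℂ) 1) :
    ‖mob (g w) (g z)‖ ≤ ‖mob w z‖ := by
  have hw1 : ‖w‖ < 1 := by simpa using mem_ball_zero_iff.1 hw
  have hz1 : ‖z‖ < 1 := by simpa using mem_ball_zero_iff.1 hz
  have hgw : g w ∈ ball (0:ℂ) 1 := hmap hw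
  have hgw1 : ‖g w‖ < 1 := by simpa using mem_ball_zero_iff.1 hgw
  set h : ℂ → ℂ := fun ζ => mob (g w) (g (mob w ζ)) with hh
  have hmw : MapsTo (mob w) (ball (0:ℂ) 1) (ball (0:ℂ) 1) := fun ζ hζ =>
    mob_mem_ball w ζ hw1 (by simpa using mem_ball_zero_iff.1 hζ)
  have hdiff : DifferentiableOn ℂ h (ball (0:ℂ) 1) := by
    apply ((mob_diff (g w) hgw1).comp (hg.comp (mob_diff w hw1) hmw) _)
    exact fun ζ hζ => hmap (hmw hζ)
  have hmaps : MapsTo h (ball (0:ℂ) 1) (ball (0:ℂ) 1) := by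
    intro ζ hζ
    have := hmap (hmw hζ)
    exact mob_mem_ball (g w) _ hgw1 (by simpa using mem_ball_zero_iff.1 this)
  have h0 : h 0 = 0 := by
    have : mob w 0 = w := by simp [mob]
    rw [hh]; simp only [this, mob_self]
  have key := Complex.norm_le_norm_of_mapsTo_ball hdiff (hmaps.mono_right ball_subset_closedBall) h0
    (z := mob w z) (by simpa using mem_ball_zero_iff.1 (mob_mem_ball w z hw1 hz1))
  have : h (mob w z) = mob (g w) (g z) := by rw [hh]; simp only [mob_invol w z hw1 hz1]
  rwa [this] at key


set_option maxHeartbeats 1000000 in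
lemma abs_le_of_mob_le (u v : ℂ) (hu : ‖u‖ < 1) (hv : ‖v‖ < 1)
    (p : ℝ) (hp1 : p ≤ 1) (h : ‖mob v u‖ ≤ p) :
    ‖u‖ * (1 + ‖v‖ * p) ≤ ‖v‖ + p := by
  set x := ‖u‖ with hx
  set y := ‖v‖ with hy
  have hx0 : 0 ≤ x := norm_nonneg u
  have hy0 : 0 ≤ y := norm_nonneg v
  have hp0 : 0 ≤ p := le_trans (norm_nonneg _) h
  have hxy : 0 ≤ 1 - y * x := by nlinarith
  have hA : 1 - y * x ≤ ‖1 - (starRingEnd ℂ) v * u‖ := by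
    have := norm_sub_norm_le (1:ℂ) ((starRingEnd ℂ) v * u)
    simpa [norm_mul, Complex.norm_conj] using this
  have hd := mob_denom_ne v u hv hu
  have hdp : 0 < ‖1 - (starRingEnd ℂ) v * u‖ := by
    simpa [norm_pos_iff] using hd
  have habs : ‖v - u‖ ≤ p * ‖1 - (starRingEnd ℂ) v * u‖ := by
    have : ‖v - u‖ / ‖1 - (starRingEnd ℂ) v * u‖ ≤ p := by
      rw [← norm_div]; exact h
    calc ‖v - u‖
        = ‖v - u‖ / ‖1 - (starRingEnd ℂ) v * u‖
            * ‖1 - (starRingEnd ℂ) v * u‖ := by rw [div_mul_cancel₀ _ hdp.ne']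
      _ ≤ p * ‖1 - (starRingEnd ℂ) v * u‖ :=
          mul_le_mul_of_nonneg_right this hdp.le
  have fid := mob_normSq_identity v u
  have e1 : Complex.normSq (v - u) = ‖v - u‖ ^ 2 := (Complex.sq_norm _).symm
  have e2 : Complex.normSq (1 - (starRingEnd ℂ) v * u)
      = ‖1 - (starRingEnd ℂ) v * u‖ ^ 2 := (Complex.sq_norm _).symm
  have e3 : Complex.normSq v = y ^ 2 := (Complex.sq_norm _).symm
  have e4 : Complex.normSq u = x ^ 2 := (Complex.sq_norm _).symm
  rw [e1, e2, e3, e4] at fid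
  -- (x - y)^2 ≤ p^2 (1 - x y)^2
  have hB2 : ‖v - u‖ ^ 2 ≤ p ^ 2 * ‖1 - (starRingEnd ℂ) v * u‖ ^ 2 := by
    nlinarith [mul_self_le_mul_self (norm_nonneg (v - u)) habs]
  have hA2 : (1 - y * x) ^ 2 ≤ ‖1 - (starRingEnd ℂ) v * u‖ ^ 2 := by
    nlinarith [mul_self_le_mul_self hxy hA]
  have h2 : (x - y) ^ 2 ≤ p ^ 2 * (1 - x * y) ^ 2 := by
    nlinarith [mul_nonneg (by nlinarith : (0:ℝ) ≤ 1 - p ^ 2) (sub_nonneg.2 hA2)]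
  have h3 : x - y ≤ p * (1 - x * y) := by
    nlinarith [mul_nonneg hp0 hxy, sq_nonneg (x - y - p * (1 - x*y))]
  nlinarith

lemma combine {a σ d p : ℝ} (ha0 : 0 ≤ a) (ha1 : a ≤ 1) (hσ0 : 0 ≤ σ) (hσ1 : σ ≤ 1)
    (hp0 : 0 ≤ p) (hp1 : p ≤ 1)
    (h1 : σ * (1 + a*p) ≤ a + p) (h2 : d * (1 + σ*p) ≤ σ + p) :
    (1-a)*(1-p)^2 ≤ (1-d)*(1+p)^2 := by
  have hσp : 0 < 1 + σ*p := by nlinarith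
  have hap : 0 < 1 + a*p := by nlinarith
  have hd1 : d ≤ 1 := by nlinarith
  have t1 : (1-σ)*(1-p) ≤ (1-d)*(1+σ*p) := by nlinarith
  have t2 : (1-a)*(1-p) ≤ (1-σ)*(1+a*p) := by nlinarith
  have t3 : (1-a)*(1-p)^2 ≤ (1-σ)*(1+a*p)*(1-p) :=  by
    nlinarith [mul_le_mul_of_nonneg_right t2 (by nlinarith : (0:ℝ) ≤ 1-p)]
  have t4 : (1-σ)*(1-p)*(1+a*p) ≤ (1-d)*(1+σ*p)*(1+a*p) := mul_le_mul_of_nonneg_right t1 hap.le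
  have e : 0 ≤ (1+p)^2 - (1+σ*p)*(1+a*p) := by nlinarith
  have t5 : (1-d)*(1+σ*p)*(1+a*p) ≤ (1-d)*(1+p)^2 := by
    nlinarith [mul_nonneg (by linarith : (0:ℝ) ≤ 1-d) e]
  nlinarith [t3, t4, t5]


lemma mob_abs_symm (c z : ℂ) : ‖mob c z‖ = ‖mob z c‖ := by
  rw [mob, mob, norm_div, norm_div, norm_sub_rev c z]
  congr 1
  rw [← Complex.norm_conj (1 - (starRingEnd ℂ) z * c)]
  congr 1
  simp only [map_sub, map_one, map_mul, Complex.conj_conj]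
  ring

noncomputable def Ff (φ : ℂ → ℂ) (c : ℂ) : ℂ → ℂ := fun z =>
  dslope φ c z * (1 - (starRingEnd ℂ) c * z) / (1 - (starRingEnd ℂ) (φ c) * φ z)

section Ff
variable {φ : ℂ → ℂ} (hφ : DifferentiableOn ℂ φ (ball (0:ℂ) 1))
  (hmap : MapsTo φ (ball (0:ℂ) 1) (ball (0:ℂ) 1)) {c : ℂ} (hc : c ∈ ball (0:ℂ) 1)

lemma abs_lt_one_of_mem {z : ℂ} (hz : z ∈ ball (0:ℂ) 1) : ‖z‖ < 1 := by
  simpa using mem_ball_zero_iff.1 hz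

include hφ hmap hc in
lemma Ff_diff : DifferentiableOn ℂ (Ff φ c) (ball (0:ℂ) 1) := by
  apply DifferentiableOn.div
  · exact ((Complex.differentiableOn_dslope (isOpen_ball.mem_nhds hc)).mpr hφ).mul
      ((differentiableOn_const _).sub ((differentiableOn_const _).mul differentiableOn_id))
  · exact (differentiableOn_const _).sub ((differentiableOn_const _).mul hφ)
  · intro z hz
    exact mob_denom_ne (φ c) (φ z) (abs_lt_one_of_mem (hmap hc)) (abs_lt_one_of_mem (hmap hz))

include hmap hc in
lemma Ff_eq {z : ℂ} (hz : z ∈ ball (0:ℂ) 1) (hne : z ≠ c) :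
    Ff φ c z = mob (φ c) (φ z) / mob c z := by
  have h1 := mob_denom_ne c z (abs_lt_one_of_mem hc) (abs_lt_one_of_mem hz)
  have h2 := mob_denom_ne (φ c) (φ z) (abs_lt_one_of_mem (hmap hc)) (abs_lt_one_of_mem (hmap hz))
  have h3 : z - c ≠ 0 := sub_ne_zero.2 hne
  have h4 : c - z ≠ 0 := fun h => h3 (by linear_combination -h)
  rw [Ff, mob, mob, dslope_of_ne _ hne, slope_def_field]
  field_simp
  ring

include hmap hc in
lemma Ff_same : ‖Ff φ c c‖ = Dh φ c := by
  have h1 : (1 : ℂ) - (starRingEnd ℂ) c * c = ((1 - ‖c‖ ^ 2 : ℝ) : ℂ) := by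
    rw [mul_comm, Complex.mul_conj]
    norm_cast
    rw [Complex.sq_norm]
  have h2 : (1 : ℂ) - (starRingEnd ℂ) (φ c) * (φ c) = ((1 - ‖φ c‖ ^ 2 : ℝ) : ℂ) := by
    rw [mul_comm, Complex.mul_conj]
    norm_cast
    rw [Complex.sq_norm]
  have hc1 : ‖c‖ < 1 := abs_lt_one_of_mem hc
  have hc2 : ‖φ c‖ < 1 := abs_lt_one_of_mem (hmap hc)
  rw [Ff, dslope_same, h1, h2, norm_div, norm_mul, Complex.norm_real, Real.norm_eq_abs, Complex.norm_real, Real.norm_eq_abs,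
    _root_.abs_of_nonneg (by nlinarith [norm_nonneg c] : (0:ℝ) ≤ 1 - ‖c‖ ^ 2),
    _root_.abs_of_nonneg (by nlinarith [norm_nonneg (φ c)] : (0:ℝ) ≤ 1 - ‖φ c‖ ^ 2),
    Dh, mul_comm]

include hφ hmap hc in
lemma Ff_abs_le {z : ℂ} (hz : z ∈ ball (0:ℂ) 1) : ‖Ff φ c z‖ ≤ 1 := by
  rcases eq_or_ne z c with rfl | hne
  · have hcont : ContinuousAt (fun w => ‖Ff φ z w‖) z :=
      continuous_norm.continuousAt.comp
        (((Ff_diff hφ hmap hz).differentiableAt (isOpen_ball.mem_nhds hz)).continuousAt)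
    have htend : Tendsto (fun w => ‖Ff φ z w‖) (nhdsWithin z {z}ᶜ)
        (nhds (‖Ff φ z z‖)) := hcont.tendsto.mono_left nhdsWithin_le_nhds
    refine le_of_tendsto htend ?_
    have hball : ∀ᶠ w in nhdsWithin z {z}ᶜ, w ∈ ball (0:ℂ) 1 :=
      eventually_nhdsWithin_of_eventually_nhds (isOpen_ball.eventually_mem hz)
    filter_upwards [hball, self_mem_nhdsWithin] with w hw hwne
    have hne' : w ≠ z := hwne
    rw [Ff_eq hmap hz hw hne', norm_div]
    have hmz : mob z w ≠ 0 := by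
      rw [mob]
      apply div_ne_zero (sub_ne_zero.2 (fun h => hne' h.symm))
      exact mob_denom_ne z w (abs_lt_one_of_mem hz) (abs_lt_one_of_mem hw)
    have hpos : 0 < ‖mob z w‖ := by simpa [norm_pos_iff] using hmz
    rw [div_le_one hpos]
    exact schwarz_pick φ hφ hmap w z hw hz
  · rw [Ff_eq hmap hc hz hne, norm_div]
    have hmz : mob c z ≠ 0 := by
      rw [mob]
      apply div_ne_zero (sub_ne_zero.2 (fun h => hne (by linear_combination -h)))
      exact mob_denom_ne c z (abs_lt_one_of_mem hc) (abs_lt_one_of_mem hz)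
    have hpos : 0 < ‖mob c z‖ := by simpa [norm_pos_iff] using hmz
    rw [div_le_one hpos]
    exact schwarz_pick φ hφ hmap z c hz hc

include hmap in
lemma Ff_symm {z : ℂ} (hz : z ∈ ball (0:ℂ) 1) (hc' : c ∈ ball (0:ℂ) 1) (hne : z ≠ c) :
    ‖Ff φ c z‖ = ‖Ff φ z c‖ := by
  rw [Ff_eq hmap hc' hz hne, Ff_eq hmap hz hc' (Ne.symm hne), norm_div, norm_div,
    mob_abs_symm c z, mob_abs_symm (φ c) (φ z)]

end Ff


section Key
variable {φ : ℂ → ℂ} (hφ : DifferentiableOn ℂ φ (ball (0:ℂ) 1))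
  (hmap : MapsTo φ (ball (0:ℂ) 1) (ball (0:ℂ) 1))

include hφ hmap in
lemma sp_step (F : ℂ → ℂ) (hFd : DifferentiableOn ℂ F (ball (0:ℂ) 1))
    (hF1 : ∀ z ∈ ball (0:ℂ) 1, ‖F z‖ ≤ 1)
    {z w : ℂ} (hz : z ∈ ball (0:ℂ) 1) (hw : w ∈ ball (0:ℂ) 1)
    {p : ℝ} (hp1 : p ≤ 1) (hmob : ‖mob w z‖ ≤ p)
    {ε : ℝ} (hε : ε ∈ Ioo (0:ℝ) 1) :
    (1-ε) * ‖F z‖ * (1 + (1-ε) * ‖F w‖ * p)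
      ≤ (1-ε) * ‖F w‖ + p := by
  set g : ℂ → ℂ := fun ζ => ((1-ε : ℝ) : ℂ) * F ζ with hg
  have hε0 : (0:ℝ) < 1 - ε := by linarith [hε.2]
  have hε1 : (1:ℝ) - ε < 1 := by linarith [hε.1]
  have habsg : ∀ ζ, ‖g ζ‖ = (1-ε) * ‖F ζ‖ := by
    intro ζ
    rw [hg]
    simp only [norm_mul, Complex.norm_real, Real.norm_eq_abs, _root_.abs_of_pos hε0]
  have hgd : DifferentiableOn ℂ g (ball (0:ℂ) 1) := (differentiableOn_const _).mul hFd
  have hgm : MapsTo g (ball (0:ℂ) 1) (ball (0:ℂ) 1) := by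
    intro ζ hζ
    rw [mem_ball_zero_iff, habsg]
    calc (1-ε) * ‖F ζ‖ ≤ (1-ε) * 1 :=
          mul_le_mul_of_nonneg_left (hF1 ζ hζ) hε0.le
      _ < 1 := by linarith
  have hsp := schwarz_pick g hgd hgm z w hz hw
  have h := abs_le_of_mob_le (g z) (g w) (abs_lt_one_of_mem (hgm hz))
    (abs_lt_one_of_mem (hgm hw)) p hp1 (le_trans hsp hmob)
  rwa [habsg, habsg] at h

include hφ hmap in
lemma key_pointwise {R t : ℝ} (hR0 : 0 < R) (hRt : R ≤ t) (ht1 : t < 1) :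
    (1 - Dh φ (R:ℂ)) * ((1-t)*(1+R))^2 ≤ (1 - Dh φ (t:ℂ)) * ((1+t)*(1-R))^2 := by
  have hR1 : R < 1 := lt_of_le_of_lt hRt ht1
  have ht0 : 0 < t := lt_of_lt_of_le hR0 hRt
  have hRball : (R:ℂ) ∈ ball (0:ℂ) 1 := by
    rw [mem_ball_zero_iff, Complex.norm_real, Real.norm_eq_abs]
    rw [_root_.abs_of_pos hR0]; exact hR1
  have htball : (t:ℂ) ∈ ball (0:ℂ) 1 := by
    rw [mem_ball_zero_iff, Complex.norm_real, Real.norm_eq_abs]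
    rw [_root_.abs_of_pos ht0]; exact ht1
  have h1tR : 0 < 1 - t*R := by nlinarith
  set p := (t - R)/(1 - t*R) with hpdef
  have hp0 : 0 ≤ p := div_nonneg (by linarith) h1tR.le
  have hp1 : p < 1 := by
    rw [hpdef, div_lt_one h1tR]; nlinarith
  have hmobp : ‖mob (R:ℂ) (t:ℂ)‖ = p := by
    rw [mob, Complex.conj_ofReal]
    have : ((R:ℂ) - t) / (1 - (R:ℂ) * t) = (((R - t)/(1 - R*t) : ℝ) : ℂ) := by push_cast; ring
    rw [this, Complex.norm_real, Real.norm_eq_abs, abs_div, _root_.abs_of_nonpos (by linarith : R - t ≤ 0),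
      _root_.abs_of_pos (by nlinarith : (0:ℝ) < 1 - R*t), hpdef]
    ring_nf
  set a := Dh φ (R:ℂ) with hadef
  set d := Dh φ (t:ℂ) with hddef
  set σ := ‖Ff φ (R:ℂ) (t:ℂ)‖ with hσdef
  have hσR : ‖Ff φ (R:ℂ) (R:ℂ)‖ = a := Ff_same hmap hRball
  have hσt : ‖Ff φ (t:ℂ) (t:ℂ)‖ = d := Ff_same hmap htball
  have hσ0 : 0 ≤ σ := norm_nonneg _
  have hσ1 : σ ≤ 1 := Ff_abs_le hφ hmap hRball htball
  have ha0 : 0 ≤ a := by rw [← hσR]; exact norm_nonneg _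
  have ha1 : a ≤ 1 := by rw [← hσR]; exact Ff_abs_le hφ hmap hRball hRball
  -- first Schwarz--Pick step, with ε
  have step1 : σ * (1 + a * p) ≤ a + p := by
    rcases eq_or_lt_of_le hRt with rfl | hRtlt
    · have : p = 0 := by rw [hpdef]; simp
      rw [this]
      simp only [mul_zero, add_zero, mul_one]
      exact le_of_eq (by rw [hσdef, hadef, ← Ff_same hmap hRball])
    have hev : ∀ᶠ ε in nhdsWithin (0:ℝ) (Ioi 0),
        (1-ε) * σ * (1 + (1-ε) * a * p) ≤ (1-ε) * a + p := by
      filter_upwards [Ioo_mem_nhdsGT_of_mem (by constructor <;> norm_num : (0:ℝ) ∈ Ico 0 1)]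
        with ε hε
      have := sp_step hφ hmap (Ff φ (R:ℂ)) (Ff_diff hφ hmap hRball)
        (fun z hz => Ff_abs_le hφ hmap hRball hz) htball hRball hp1.le (le_of_eq hmobp) hε
      rwa [hσR, ← hσdef] at this
    have hl : Tendsto (fun ε : ℝ => (1-ε) * σ * (1 + (1-ε) * a * p))
        (nhdsWithin (0:ℝ) (Ioi 0)) (nhds (σ * (1 + a * p))) := by
      have : ContinuousAt (fun ε : ℝ => (1-ε) * σ * (1 + (1-ε) * a * p)) 0 := by fun_prop
      have h0 := this.tendsto.mono_left (nhdsWithin_le_nhds (s := Ioi (0:ℝ)))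
      simpa using h0
    have hr : Tendsto (fun ε : ℝ => (1-ε) * a + p)
        (nhdsWithin (0:ℝ) (Ioi 0)) (nhds (a + p)) := by
      have : ContinuousAt (fun ε : ℝ => (1-ε) * a + p) 0 := by fun_prop
      have h0 := this.tendsto.mono_left (nhdsWithin_le_nhds (s := Ioi (0:ℝ)))
      simpa using h0
    exact le_of_tendsto_of_tendsto hl hr hev
  -- second step
  have step2 : d * (1 + σ * p) ≤ σ + p := by
    rcases eq_or_lt_of_le hRt with rfl | hRtlt
    · have : p = 0 := by rw [hpdef]; simp
      rw [this]
      simp only [mul_zero, add_zero, mul_one]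
      exact le_of_eq (by rw [hddef, hσdef, ← Ff_same hmap hRball])
    have hσsymm : ‖Ff φ (t:ℂ) (R:ℂ)‖ = σ := by
      rw [hσdef]
      exact Ff_symm hmap hRball htball (by
        intro h
        have : R = t := by exact_mod_cast h
        exact (ne_of_lt hRtlt) this)
    have hev : ∀ᶠ ε in nhdsWithin (0:ℝ) (Ioi 0),
        (1-ε) * d * (1 + (1-ε) * σ * p) ≤ (1-ε) * σ + p := by
      filter_upwards [Ioo_mem_nhdsGT_of_mem (by constructor <;> norm_num : (0:ℝ) ∈ Ico 0 1)]
        with ε hε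
      have := sp_step hφ hmap (Ff φ (t:ℂ)) (Ff_diff hφ hmap htball)
        (fun z hz => Ff_abs_le hφ hmap htball hz) htball hRball hp1.le (le_of_eq hmobp) hε
      rwa [hσt, hσsymm] at this
    have hl : Tendsto (fun ε : ℝ => (1-ε) * d * (1 + (1-ε) * σ * p))
        (nhdsWithin (0:ℝ) (Ioi 0)) (nhds (d * (1 + σ * p))) := by
      have : ContinuousAt (fun ε : ℝ => (1-ε) * d * (1 + (1-ε) * σ * p)) 0 := by fun_prop
      have h0 := this.tendsto.mono_left (nhdsWithin_le_nhds (s := Ioi (0:ℝ)))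
      simpa using h0
    have hr : Tendsto (fun ε : ℝ => (1-ε) * σ + p)
        (nhdsWithin (0:ℝ) (Ioi 0)) (nhds (σ + p)) := by
      have : ContinuousAt (fun ε : ℝ => (1-ε) * σ + p) 0 := by fun_prop
      have h0 := this.tendsto.mono_left (nhdsWithin_le_nhds (s := Ioi (0:ℝ)))
      simpa using h0
    exact le_of_tendsto_of_tendsto hl hr hev
  have hcomb := combine ha0 ha1 hσ0 hσ1 hp0 hp1.le step1 step2
  -- substitute p
  have e1 : (1-p)*(1-t*R) = (1-t)*(1+R) := by
    rw [hpdef]; field_simp; ring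
  have e2 : (1+p)*(1-t*R) = (1+t)*(1-R) := by
    rw [hpdef]; field_simp; ring
  calc (1 - a) * ((1-t)*(1+R))^2 = (1 - a) * (1-p)^2 * (1-t*R)^2 := by
        rw [← e1]; ring
    _ ≤ (1 - d) * (1+p)^2 * (1-t*R)^2 := by nlinarith [sq_nonneg (1-t*R)]
    _ = (1 - d) * ((1+t)*(1-R))^2 := by rw [← e2]; ring

end Key


theorem radial_distortion_integral (φ : ℂ → ℂ)
    (hφ : DifferentiableOn ℂ φ (ball (0:ℂ) 1))
    (hmap : MapsTo φ (ball (0:ℂ) 1) (ball (0:ℂ) 1))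
    (hint : IntegrableOn (fun r : ℝ => (1 - Dh φ (r : ℂ)) * (2 / (1 - r ^ 2)))
      (Ioo (0:ℝ) 1)) :
    (∀ R ∈ Ioo (0:ℝ) 1,
        (1 - Dh φ (R : ℂ)) / 2
          ≤ ∫ r in Ioo R 1, (1 - Dh φ (r : ℂ)) * (2 / (1 - r ^ 2)))
    ∧ Tendsto (fun r : ℝ => Dh φ (r : ℂ)) (nhdsWithin 1 (Iio 1)) (nhds 1) := by
  set f : ℝ → ℝ := fun r => (1 - Dh φ (r : ℂ)) * (2 / (1 - r ^ 2)) with hf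
  have part1 : ∀ R ∈ Ioo (0:ℝ) 1, (1 - Dh φ (R : ℂ)) / 2 ≤ ∫ r in Ioo R 1, f r := by
    intro R hR
    obtain ⟨hR0, hR1⟩ := hR
    set a := Dh φ (R:ℂ) with hadef
    set C := (1 - a) * ((1+R)/(1-R))^2 with hCdef
    set g : ℝ → ℝ := fun r => C * (2*(1-r)/(1+r)^3) with hgdef
    have h1R : (0:ℝ) < 1 - R := by linarith
    have h1R' : (0:ℝ) < 1 + R := by linarith
    -- pointwise bound
    have hA : ∀ r ∈ Ioo R 1, g r ≤ f r := by
      intro r hr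
      have hr1 : r < 1 := hr.2
      have hrR : R ≤ r := hr.1.le
      have h1r : (0:ℝ) < 1 - r := by linarith
      have h1r' : (0:ℝ) < 1 + r := by linarith
      have hkp := key_pointwise hφ hmap hR0 hrR hr1
      have hkp' : (1-a)*((1+R)*(1-r))^2 ≤ (1 - Dh φ (r:ℂ))*((1-R)*(1+r))^2 := by
        nlinarith [hkp]
      have hq : (1-a) * (((1+R)*(1-r))/((1-R)*(1+r)))^2 ≤ 1 - Dh φ (r:ℂ) := by
        rw [div_pow, ← mul_div_assoc, div_le_iff₀ (by positivity)]
        exact hkp'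
      have hg_eq : g r = ((1-a) * ((((1+R)*(1-r))/((1-R)*(1+r)))^2)) * (2/(1-r^2)) := by
        have e0 : 1 - r^2 = (1-r)*(1+r) := by ring
        have n1 : (1-R) ≠ 0 := ne_of_gt h1R
        have n2 : (1+r) ≠ 0 := ne_of_gt h1r'
        have n3 : (1-r) ≠ 0 := ne_of_gt h1r
        simp only [hgdef, hCdef, e0]
        field_simp
      rw [hg_eq, hf]
      exact mul_le_mul_of_nonneg_right hq
        (le_of_lt (div_pos two_pos (by nlinarith : (0:ℝ) < 1 - r^2)))
    have hBint : IntegrableOn f (Ioo R 1) := hint.mono_set (Ioo_subset_Ioo hR0.le le_rfl)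
    have hgcont : ContinuousOn g (Icc R 1) := by
      apply ContinuousOn.mul continuousOn_const
      apply ContinuousOn.div
      · fun_prop
      · fun_prop
      · intro x hx
        have hx1 : (0:ℝ) < 1 + x := by nlinarith [hx.1]
        exact pow_ne_zero _ (ne_of_gt hx1)
    have hCint : IntegrableOn g (Ioo R 1) :=
      (hgcont.integrableOn_Icc).mono_set Ioo_subset_Icc_self
    -- value of ∫ g
    have hDval : ∫ r in Ioo R 1, g r = (1 - a)/2 := by
      have h1 : ∫ r in Ioo R 1, g r = ∫ r in R..1, g r := by
        rw [intervalIntegral.integral_of_le hR1.le, integral_Ioc_eq_integral_Ioo]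
      set H : ℝ → ℝ := fun r => C * (2*r/(1+r)^2) with hHdef
      have hderiv : ∀ x ∈ uIcc R (1:ℝ), HasDerivAt H (g x) x := by
        intro x hx
        rw [uIcc_of_le hR1.le] at hx
        have hx1 : (0:ℝ) < 1 + x := by nlinarith [hx.1]
        have hd1 : HasDerivAt (fun r : ℝ => 2*r/(1+r)^2)
            ((2*(1+x)^2 - (2*x)*(2*(1+x)))/((1+x)^2)^2) x := by
          apply HasDerivAt.div
          · simpa using (hasDerivAt_id x).const_mul (2:ℝ)
          · have : HasDerivAt (fun r : ℝ => 1 + r) 1 x := by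
              simpa using (hasDerivAt_id x).const_add (1:ℝ)
            simpa [mul_comm] using this.fun_pow 2
          · positivity
        have := hd1.const_mul C
        refine this.congr_deriv ?_
        rw [hgdef]
        field_simp
        ring
      have h2 : ∫ r in R..1, g r = H 1 - H R := by
        apply intervalIntegral.integral_eq_sub_of_hasDerivAt hderiv
        apply ContinuousOn.intervalIntegrable
        rwa [uIcc_of_le hR1.le]
      rw [h1, h2, hHdef, hCdef]
      field_simp
      ring
    calc (1 - a)/2 = ∫ r in Ioo R 1, g r := hDval.symm
      _ ≤ ∫ r in Ioo R 1, f r := setIntegral_mono_on hCint hBint measurableSet_Ioo hA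
  refine ⟨part1, ?_⟩
  -- part 2
  have hDle1 : ∀ r ∈ Ioo (0:ℝ) 1, Dh φ (r:ℂ) ≤ 1 := by
    intro r hr
    have hmem : (r:ℂ) ∈ ball (0:ℂ) 1 := by
      rw [mem_ball_zero_iff, Complex.norm_real, Real.norm_eq_abs,
        _root_.abs_of_pos hr.1]
      exact hr.2
    rw [← Ff_same hmap hmem]
    exact Ff_abs_le hφ hmap hmem hmem
  have htail : Tendsto (fun r => ∫ x in Ioo r 1, f x) (nhdsWithin 1 (Iio 1)) (nhds 0) := by
    have hdom : Tendsto (fun r => ∫ x in Ioo (0:ℝ) 1, (Ioo r 1).indicator f x)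
        (nhdsWithin 1 (Iio 1)) (nhds (∫ x in Ioo (0:ℝ) 1, (0:ℝ))) := by
      apply MeasureTheory.tendsto_integral_filter_of_dominated_convergence
        (bound := fun x => |f x|)
      · exact Eventually.of_forall (fun r =>
          (hint.aestronglyMeasurable.indicator measurableSet_Ioo))
      · refine Eventually.of_forall (fun r => ?_)
        refine Eventually.of_forall (fun x => ?_)
        by_cases hx : x ∈ Ioo r 1
        · simp [Set.indicator_of_mem hx]
        · simp [Set.indicator_of_notMem hx, abs_nonneg]
      · exact hint.abs
      · filter_upwards [ae_restrict_mem measurableSet_Ioo] with x hx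
        have hev : ∀ᶠ r in nhdsWithin 1 (Iio 1), (Ioo r 1).indicator f x = 0 := by
          filter_upwards [Ioo_mem_nhdsLT_of_mem (⟨hx.2, le_rfl⟩ : (1:ℝ) ∈ Ioc x 1)]
            with r hr
          exact Set.indicator_of_notMem (fun hmem => absurd hmem.1 (not_lt.2 hr.1.le)) f
        exact Tendsto.congr' (hev.mono fun r h => h.symm) tendsto_const_nhds
    rw [integral_zero] at hdom
    apply Tendsto.congr' _ hdom
    filter_upwards [Ioo_mem_nhdsLT_of_mem (⟨by norm_num, le_rfl⟩ : (1:ℝ) ∈ Ioc 0 1)]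
      with r hr
    rw [setIntegral_indicator measurableSet_Ioo]
    congr 1
    rw [inter_eq_self_of_subset_right (Ioo_subset_Ioo hr.1.le le_rfl)]
  have hsub : Tendsto (fun r : ℝ => 1 - Dh φ (r:ℂ)) (nhdsWithin 1 (Iio 1)) (nhds 0) := by
    have h2tail : Tendsto (fun r => 2 * ∫ x in Ioo r 1, f x) (nhdsWithin 1 (Iio 1)) (nhds 0) := by
      simpa using htail.const_mul 2
    apply tendsto_of_tendsto_of_tendsto_of_le_of_le' tendsto_const_nhds h2tail
    · filter_upwards [Ioo_mem_nhdsLT_of_mem (⟨by norm_num, le_rfl⟩ : (1:ℝ) ∈ Ioc 0 1)]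
        with r hr
      linarith [hDle1 r hr]
    · filter_upwards [Ioo_mem_nhdsLT_of_mem (⟨by norm_num, le_rfl⟩ : (1:ℝ) ∈ Ioc 0 1)]
        with r hr
      linarith [part1 r hr]
  have h1' : Tendsto (fun _ : ℝ => (1:ℝ)) (nhdsWithin 1 (Iio 1)) (nhds 1) := tendsto_const_nhds
  have := h1'.sub hsub
  simpa using this
end

section
/- Let F : ℍ → ℍ be holomorphic on the right half-plane and suppose the limit F'(∞) := lim_{x→+∞} F(x)/x along the positive real axis exists and is a positive real number. Then ∫₁^∞ (1 - D_h F(x)) dx/x < +∞, where D_h F(x) = x|F'(x)|/Re F(x). -/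
open Set MeasureTheory Filter

/-- The right half-plane. -/
def HalfPlane : Set ℂ := {z : ℂ | 0 < z.re}

/-- Hyperbolic distortion of a self-map of the right half-plane. -/
noncomputable def DhH (F : ℂ → ℂ) (ζ : ℂ) : ℝ :=
  ζ.re / (F ζ).re * ‖deriv F ζ‖

open Metric

lemma isOpen_halfPlane : IsOpen HalfPlane :=
  isOpen_lt continuous_const Complex.continuous_re

/-- Schwarz–Pick inequality at a real point. -/
lemma schwarz_pick_s7 (F : ℂ → ℂ) (hF : DifferentiableOn ℂ F HalfPlane)
    (hmap : MapsTo F HalfPlane HalfPlane) {x : ℝ} (hx : 0 < x) :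
    x * ‖deriv F (x : ℂ)‖ ≤ (F (x : ℂ)).re := by
  have hxH : (x : ℂ) ∈ HalfPlane := by simpa [HalfPlane] using hx
  set a : ℂ := F (x : ℂ) with ha
  have haH : 0 < a.re := hmap hxH
  set φ : ℂ → ℂ := fun z => (x * (1 + z)) / (1 - z) with hφdef
  have hne1 : ∀ z ∈ ball (0 : ℂ) 1, (1 : ℂ) - z ≠ 0 := by
    intro z hz h
    have hz1 : ‖z‖ < 1 := by simpa using mem_ball_zero_iff.1 hz
    have : z = 1 := by linear_combination -h
    simp [this] at hz1
  have hφmaps : ∀ z ∈ ball (0 : ℂ) 1, φ z ∈ HalfPlane := by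
    intro z hz
    have hz1 : ‖z‖ < 1 := by simpa using mem_ball_zero_iff.1 hz
    have hns : Complex.normSq z < 1 := by
      have := Complex.sq_norm z
      nlinarith [norm_nonneg z]
    have hdpos : 0 < Complex.normSq (1 - z) := Complex.normSq_pos.2 (hne1 z hz)
    show 0 < (φ z).re
    rw [hφdef]
    simp only [Complex.div_re]
    have h1 : ((x : ℂ) * (1 + z)).re = x * (1 + z.re) := by
      simp [Complex.re_ofReal_mul]
    have h2 : ((x : ℂ) * (1 + z)).im = x * z.im := by
      simp [Complex.im_ofReal_mul]
    have h3 : ((1 : ℂ) - z).re = 1 - z.re := by simp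
    have h4 : ((1 : ℂ) - z).im = -z.im := by simp
    rw [h1, h2, h3, h4, ← add_div]
    apply div_pos _ hdpos
    have hns' : z.re ^ 2 + z.im ^ 2 < 1 := by
      have : Complex.normSq z = z.re ^ 2 + z.im ^ 2 := by simp [Complex.normSq_apply]; ring
      linarith [this ▸ hns]
    nlinarith
  have hφ0 : φ 0 = (x : ℂ) := by simp [hφdef]
  have hden : ∀ w : ℂ, 0 < w.re → w + (starRingEnd ℂ) a ≠ 0 := by
    intro w hw h
    have h2 : (w + (starRingEnd ℂ) a).re = w.re + a.re := by simp
    rw [h] at h2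
    simp only [Complex.zero_re] at h2
    linarith
  set g : ℂ → ℂ := fun z => (F (φ z) - a) / (F (φ z) + (starRingEnd ℂ) a) with hgdef
  have hφdiff : ∀ z ∈ ball (0 : ℂ) 1, DifferentiableAt ℂ φ z := by
    intro z hz
    exact (((differentiable_const _).mul ((differentiable_const _).add differentiable_id)).differentiableAt).div
      (((differentiable_const _).sub differentiable_id).differentiableAt) (hne1 z hz)
  have hFd : ∀ z ∈ ball (0 : ℂ) 1, DifferentiableAt ℂ F (φ z) := fun z hz =>
    hF.differentiableAt (isOpen_halfPlane.mem_nhds (hφmaps z hz))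
  have hgd : DifferentiableOn ℂ g (ball 0 1) := by
    intro z hz
    exact ((((hFd z hz).comp z (hφdiff z hz)).sub_const a).div
      (((hFd z hz).comp z (hφdiff z hz)).add_const _)
      (hden _ (hmap (hφmaps z hz)))).differentiableWithinAt
  have hg0 : g 0 = 0 := by simp [hgdef, hφ0, ← ha]
  have hgmaps : MapsTo g (ball (0:ℂ) 1) (ball (g 0) 1) := by
    intro z hz
    rw [hg0, mem_ball_zero_iff]
    set w : ℂ := F (φ z) with hw
    have hwre : 0 < w.re := hmap (hφmaps z hz)
    have hdn : w + (starRingEnd ℂ) a ≠ 0 := hden w hwre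
    have habs : 0 < ‖w + (starRingEnd ℂ) a‖ := norm_pos_iff.mpr hdn
    rw [hgdef]
    simp only [norm_div]
    rw [div_lt_one habs]
    apply lt_of_pow_lt_pow_left₀ 2 habs.le
    rw [Complex.sq_norm, Complex.sq_norm]
    simp only [Complex.normSq_apply, Complex.sub_re, Complex.sub_im, Complex.add_re,
      Complex.add_im, Complex.conj_re, Complex.conj_im]
    nlinarith
  -- derivative computation
  have hball : (0 : ℂ) ∈ ball (0 : ℂ) 1 := by simp
  have hφ' : HasDerivAt φ (2 * x) 0 := by
    have hnum : HasDerivAt (fun z : ℂ => (x : ℂ) * (1 + z)) x 0 := by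
      simpa using (((hasDerivAt_id (0 : ℂ)).const_add 1).const_mul (x : ℂ))
    have hden' : HasDerivAt (fun z : ℂ => (1 : ℂ) - z) (-1) 0 := by
      simpa using (hasDerivAt_id (0 : ℂ)).const_sub 1
    have := hnum.div hden' (by norm_num)
    refine this.congr_deriv ?_
    push_cast
    field_simp
    ring
  have hF' : HasDerivAt F (deriv F (x : ℂ)) (x : ℂ) :=
    (hF.differentiableAt (isOpen_halfPlane.mem_nhds hxH)).hasDerivAt
  have hF'0 : HasDerivAt F (deriv F (x : ℂ)) (φ 0) := hφ0 ▸ hF'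
  have hcomp : HasDerivAt (fun z => F (φ z)) (deriv F (x : ℂ) * (2 * x)) 0 :=
    hF'0.comp 0 hφ'
  set c : ℂ := deriv F (x : ℂ) * (2 * x) with hc
  have hnum : HasDerivAt (fun z => F (φ z) - a) c 0 := hcomp.sub_const a
  have hden2 : HasDerivAt (fun z => F (φ z) + (starRingEnd ℂ) a) c 0 := hcomp.add_const _
  have hFφ0 : F (φ 0) = a := by rw [hφ0]
  have hane : a + (starRingEnd ℂ) a ≠ 0 := hden a haH
  have hg' : HasDerivAt g (c / (a + (starRingEnd ℂ) a)) 0 := by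
    have := hnum.div hden2 (by rw [hFφ0]; exact hane)
    refine this.congr_deriv ?_
    rw [hFφ0]
    field_simp
    ring
  have hderiv_g : deriv g 0 = c / (a + (starRingEnd ℂ) a) := hg'.deriv
  have hsch := Complex.norm_deriv_le_div_of_mapsTo_ball hgd (hgmaps.mono_right ball_subset_closedBall) one_pos
  rw [hderiv_g] at hsch
  have hconj : a + (starRingEnd ℂ) a = ((2 * a.re : ℝ) : ℂ) := Complex.add_conj a
  have habs2 : ‖a + (starRingEnd ℂ) a‖ = 2 * a.re := by
    rw [hconj, Complex.norm_real, Real.norm_eq_abs, abs_of_pos (by linarith)]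
  rw [norm_div, habs2, hc, norm_mul] at hsch
  have h2x : ‖2 * (x : ℂ)‖ = 2 * x := by
    rw [norm_mul, Complex.norm_real, Complex.norm_two, Real.norm_eq_abs, abs_of_pos hx]
  rw [h2x, div_le_iff₀ (by linarith)] at hsch
  have := hsch
  nlinarith [norm_nonneg (deriv F (x : ℂ))]

theorem angular_derivative_implies_integrability (F : ℂ → ℂ)
    (hF : DifferentiableOn ℂ F HalfPlane)
    (hmap : MapsTo F HalfPlane HalfPlane)
    (L : ℝ) (hL : 0 < L)
    (hlim : Tendsto (fun x : ℝ => F (x : ℂ) / (x : ℂ)) atTop (nhds (L : ℂ))) :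
    IntegrableOn (fun x : ℝ => (1 - DhH F (x : ℂ)) / x) (Ioi (1:ℝ)) := by
  have hmem : ∀ {x : ℝ}, 0 < x → (x : ℂ) ∈ HalfPlane := fun {x} hx => by
    simpa [HalfPlane] using hx
  set u : ℝ → ℝ := fun x => (F (x : ℂ)).re with hu_def
  have hu_pos : ∀ {x : ℝ}, 0 < x → 0 < u x := fun {x} hx => hmap (hmem hx)
  have hu' : ∀ {x : ℝ}, 0 < x → HasDerivAt u (deriv F (x : ℂ)).re x := fun {x} hx =>
    ((hF.differentiableAt (isOpen_halfPlane.mem_nhds (hmem hx))).hasDerivAt).real_of_complex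
  set B : ℝ → ℝ := fun x => x⁻¹ - (deriv F (x : ℂ)).re / u x with hB_def
  set g : ℝ → ℝ := fun x => Real.log x - Real.log (u x) with hg_def
  have hg' : ∀ {x : ℝ}, 0 < x → HasDerivAt g (B x) x := fun {x} hx =>
    (Real.hasDerivAt_log hx.ne').sub ((hu' hx).log (hu_pos hx).ne')
  -- nonnegativity of B on Ioi 1
  have hB0 : ∀ x ∈ Ioi (1:ℝ), 0 ≤ B x := by
    intro x hx
    have hx0 : (0:ℝ) < x := lt_trans one_pos hx
    have hsp := schwarz_pick_s7 F hF hmap hx0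
    have hre := Complex.re_le_norm (deriv F (x : ℂ))
    have hupos := hu_pos hx0
    rw [hB_def]
    simp only [sub_nonneg]
    rw [div_le_iff₀ hupos]
    calc (deriv F (x : ℂ)).re ≤ ‖deriv F (x : ℂ)‖ := hre
      _ = x⁻¹ * (x * ‖deriv F (x : ℂ)‖) := by field_simp
      _ ≤ x⁻¹ * u x := by
          apply mul_le_mul_of_nonneg_left hsp (inv_nonneg.2 hx0.le)
  -- limit of g at infinity
  have h1 : Tendsto (fun y : ℝ => u y / y) atTop (nhds L) := by
    have h2 : Tendsto (fun y : ℝ => (F (y : ℂ) / (y : ℂ)).re) atTop (nhds ((L:ℂ).re)) :=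
      (Complex.continuous_re.tendsto _).comp hlim
    rw [Complex.ofReal_re] at h2
    apply h2.congr'
    filter_upwards [eventually_gt_atTop (0:ℝ)] with y hy
    rw [Complex.div_ofReal_re]
  have htendg : Tendsto g atTop (nhds (-Real.log L)) := by
    have h2 : Tendsto (fun y : ℝ => -Real.log (u y / y)) atTop (nhds (-Real.log L)) :=
      (((Real.continuousAt_log hL.ne').tendsto.comp h1)).neg
    apply h2.congr'
    filter_upwards [eventually_gt_atTop (0:ℝ)] with y hy
    rw [Real.log_div (hu_pos hy).ne' hy.ne', hg_def]
    ring
  have hcont : ContinuousWithinAt g (Ici (1:ℝ)) 1 :=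
    (hg' one_pos).continuousAt.continuousWithinAt
  have hBint : IntegrableOn B (Ioi (1:ℝ)) :=
    integrableOn_Ioi_deriv_of_nonneg hcont (fun x hx => hg' (lt_trans one_pos hx)) hB0 htendg
  -- pointwise bounds for the actual integrand
  have hbound : ∀ x ∈ Ioi (1:ℝ), 0 ≤ (1 - DhH F (x : ℂ)) / x ∧ (1 - DhH F (x : ℂ)) / x ≤ B x := by
    intro x hx
    have hx0 : (0:ℝ) < x := lt_trans one_pos hx
    have hsp := schwarz_pick_s7 F hF hmap hx0
    have hre := Complex.re_le_norm (deriv F (x : ℂ))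
    have hupos := hu_pos hx0
    have hDh : DhH F (x : ℂ) = x / u x * ‖deriv F (x : ℂ)‖ := by
      rw [DhH, Complex.ofReal_re]
    constructor
    · apply div_nonneg _ hx0.le
      rw [sub_nonneg, hDh, div_mul_eq_mul_div, div_le_one hupos]
      linarith
    · rw [hDh, hB_def]
      rw [div_le_iff₀ hx0]
      have hexp : (x⁻¹ - (deriv F (x : ℂ)).re / u x) * x
          = 1 - x * ((deriv F (x : ℂ)).re / u x) := by
        field_simp
      rw [hexp]
      have hkey : x * ((deriv F (x : ℂ)).re / u x) ≤ x / u x * ‖deriv F (x : ℂ)‖ := by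
        have heq : x * ((deriv F (x : ℂ)).re / u x) = x / u x * (deriv F (x : ℂ)).re := by ring
        rw [heq]
        exact mul_le_mul_of_nonneg_left hre (div_nonneg hx0.le hupos.le)
      linarith
  -- measurability
  have hfun : (fun x : ℝ => (1 - DhH F (x : ℂ)) / x)
      = fun x : ℝ => (1 - x / u x * ‖deriv F (x : ℂ)‖) / x := by
    funext x
    rw [DhH, Complex.ofReal_re]
  have m1 : Measurable (fun x : ℝ => deriv F (x : ℂ)) :=
    (measurable_deriv F).comp Complex.measurable_ofReal
  have mabs : Measurable (fun x : ℝ => ‖deriv F (x : ℂ)‖) :=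
    continuous_norm.measurable.comp m1
  have cu : ContinuousOn u (Ioi (1:ℝ)) := by
    apply Complex.continuous_re.comp_continuousOn
    exact hF.continuousOn.comp Complex.continuous_ofReal.continuousOn
      (fun x hx => hmem (lt_trans one_pos hx))
  have au : AEMeasurable u (volume.restrict (Ioi (1:ℝ))) :=
    cu.aemeasurable measurableSet_Ioi
  have aesm : AEStronglyMeasurable (fun x : ℝ => (1 - DhH F (x : ℂ)) / x)
      (volume.restrict (Ioi (1:ℝ))) := by
    rw [hfun]
    exact ((aemeasurable_const.sub ((measurable_id.aemeasurable.div au).mul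
      mabs.aemeasurable)).div measurable_id.aemeasurable).aestronglyMeasurable
  apply Integrable.mono hBint aesm
  filter_upwards [ae_restrict_mem measurableSet_Ioi] with x hx
  obtain ⟨h0, hle⟩ := hbound x hx
  rw [Real.norm_eq_abs, Real.norm_eq_abs, abs_of_nonneg h0]
  exact hle.trans (le_abs_self _)
end

section
/- For a ∈ [0,1), let φ_a(z) = z(z-a)/(1-az) be the degree-two Blaschke product. Then the angular derivative modulus at 1 satisfies |φ_a'(1)| = 2/(1-a), while the integral I(φ_a,1) = ∫₀¹ (1 - D_h φ_a(r)) λ(r) dr equals log(1+a) + log 2. -/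
open Metric Set MeasureTheory

private lemma blaschke_aux1 (a r : ℝ) (e1 : (1:ℝ) - r ≠ 0) (e2 : (1:ℝ) + r ≠ 0)
    (e3 : (1:ℝ) - r^2 ≠ 0) (e4 : r^2 - 2*a*r + 1 ≠ 0) :
    (1 - -(2*r - a*(1+r^2))/(r^2-2*a*r+1)) * (2/(1-r^2)) =
      2*(1-a)*(1+r)/((1-r)*(r^2-2*a*r+1)) := by
  have e5 : r * (r - 2 * a) + 1 ≠ 0 := by convert e4 using 1; ring
  field_simp
  ring

private lemma blaschke_aux2 (a r : ℝ) (e1 : (1:ℝ) - r ≠ 0) (e2 : (1:ℝ) + r ≠ 0)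
    (e3 : (1:ℝ) - r^2 ≠ 0) (e4 : r^2 - 2*a*r + 1 ≠ 0) :
    (1 - (2*r - a*(1+r^2))/(r^2-2*a*r+1)) * (2/(1-r^2)) =
      2*(1+a)*(1-r)/((1+r)*(r^2-2*a*r+1)) := by
  have e5 : r * (r - 2 * a) + 1 ≠ 0 := by convert e4 using 1; ring
  field_simp
  ring

private lemma blaschke_aux3 (a r : ℝ) (e1 : (1:ℝ) - r ≠ 0) (e4 : r^2 - 2*a*r + 1 ≠ 0) :
    2*(1-a)*(1+r)/((1-r)*(r^2-2*a*r+1)) =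
      (-2)*(-1/(1-r)) + (2*r-2*a)/(r^2-2*a*r+1) := by
  have e5 : r * (r - 2 * a) + 1 ≠ 0 := by convert e4 using 1; ring
  field_simp
  ring

private lemma blaschke_aux4 (a r : ℝ) (e2 : (1:ℝ) + r ≠ 0) (e4 : r^2 - 2*a*r + 1 ≠ 0) :
    2*(1+a)*(1-r)/((1+r)*(r^2-2*a*r+1)) =
      2*(1/(1+r)) - (2*r-2*a)/(r^2-2*a*r+1) := by
  have e5 : r * (r - 2 * a) + 1 ≠ 0 := by convert e4 using 1; ring
  field_simp
  ring

set_option maxHeartbeats 1000000 in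
theorem blaschke_example (a : ℝ) (ha0 : 0 ≤ a) (ha1 : a < 1)
    (φ : ℂ → ℂ) (hφ : ∀ z : ℂ, φ z = z * (z - (a : ℂ)) / (1 - (a : ℂ) * z)) :
    ‖deriv φ 1‖ = 2 / (1 - a)
    ∧ (∫ r in Ioo (0:ℝ) 1, (1 - Dh φ (r : ℂ)) * (2 / (1 - r ^ 2)))
        = Real.log (1 + a) + Real.log 2 := by
  have ha1' : (0:ℝ) < 1 - a := by linarith
  -- the derivative of φ
  have hd : ∀ z : ℂ, (1 - (a:ℂ)*z) ≠ 0 →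
      HasDerivAt φ ((2*z - a - a*z^2)/(1 - (a:ℂ)*z)^2) z := by
    intro z hz
    have hnum : HasDerivAt (fun z : ℂ => z * (z - (a:ℂ))) (2*z - a) z := by
      have := (hasDerivAt_id z).mul ((hasDerivAt_id z).sub_const (a:ℂ))
      exact this.congr_deriv (by simp; ring)
    have hden : HasDerivAt (fun z : ℂ => 1 - (a:ℂ)*z) (-(a:ℂ)) z := by
      have := ((hasDerivAt_id z).const_mul (a:ℂ)).const_sub 1
      exact this.congr_deriv (by simp)
    have hdiv := hnum.div hden hz
    have hfun : φ = fun z => z * (z - (a:ℂ)) / (1 - (a:ℂ)*z) := funext hφ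
    rw [hfun]
    exact hdiv.congr_deriv (by congr 1; ring)
  -- first part
  have part1 : ‖deriv φ 1‖ = 2 / (1 - a) := by
    have h1 : (1:ℂ) - (a:ℂ)*1 ≠ 0 := by
      rw [mul_one]
      have : (1:ℂ) - (a:ℂ) = ((1 - a : ℝ) : ℂ) := by push_cast; ring
      rw [this]
      exact_mod_cast ne_of_gt ha1'
    rw [(hd 1 h1).deriv]
    have e : (2*(1:ℂ) - a - a*1^2)/(1 - (a:ℂ)*1)^2 = ((2/(1-a) : ℝ) : ℂ) := by
      have : (1:ℂ) - (a:ℂ)*1 = ((1 - a : ℝ) : ℂ) := by push_cast; ring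
      rw [this]
      push_cast
      rw [div_eq_div_iff (by exact_mod_cast pow_ne_zero 2 (ne_of_gt ha1'))
        (by exact_mod_cast ne_of_gt ha1')]
      ring
    rw [e, Complex.norm_real, Real.norm_eq_abs, abs_of_pos (by positivity)]
  refine ⟨part1, ?_⟩
  -- positivity of P
  have hP : ∀ r : ℝ, (0:ℝ) < r^2 - 2*a*r + 1 := by
    intro r; nlinarith [sq_nonneg (a - r)]
  -- the hyperbolic derivative formula
  have hDh : ∀ r : ℝ, 0 ≤ r → r < 1 →
      Dh φ (r:ℂ) = |2*r - a*(1+r^2)| / (r^2 - 2*a*r + 1) := by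
    intro r hr0 hr1
    have hPr := hP r
    have har : (0:ℝ) < 1 - a*r := by nlinarith
    have harC : (1:ℂ) - (a:ℂ)*(r:ℂ) = ((1 - a*r : ℝ) : ℂ) := by push_cast; ring
    have harC0 : (1:ℂ) - (a:ℂ)*(r:ℂ) ≠ 0 := by
      rw [harC]; exact_mod_cast ne_of_gt har
    have hdr := (hd r harC0).deriv
    have hr2 : (0:ℝ) < 1 - r^2 := by nlinarith
    have habs_deriv : ‖deriv φ (r:ℂ)‖ = |2*r - a*(1+r^2)| / (1 - a*r)^2 := by
      rw [hdr]
      have e : (2*(r:ℂ) - a - a*(r:ℂ)^2) = ((2*r - a*(1+r^2) : ℝ) : ℂ) := by push_cast; ring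
      rw [e, harC, norm_div, norm_pow, Complex.norm_real, Complex.norm_real, Real.norm_eq_abs, Real.norm_eq_abs,
        abs_of_pos har]
    have hφr : φ (r:ℂ) = ((r*(r-a)/(1-a*r) : ℝ) : ℂ) := by
      rw [hφ]; push_cast; ring_nf
    have habs_φ : ‖φ (r:ℂ)‖^2 = (r*(r-a)/(1-a*r))^2 := by
      rw [hφr, Complex.norm_real, Real.norm_eq_abs, sq_abs]
    have hzabs : ‖(r:ℂ)‖^2 = r^2 := by
      rw [Complex.norm_real, Real.norm_eq_abs, sq_abs]
    unfold Dh
    rw [hzabs, habs_deriv, habs_φ]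
    have hden : 1 - (r*(r-a)/(1-a*r))^2 = (1-r^2)*(r^2-2*a*r+1)/(1-a*r)^2 := by
      rw [div_pow, one_sub_div (by positivity)]; congr 1
      ring
    rw [hden, div_eq_div_iff (by positivity) (ne_of_gt hPr)]
    field_simp
  -- the root r₀
  obtain ⟨s, hs_def⟩ : ∃ s : ℝ, s = Real.sqrt (1 - a^2) := ⟨Real.sqrt (1 - a^2), rfl⟩
  obtain ⟨r₀, hr₀_def⟩ : ∃ r₀ : ℝ, r₀ = (1 - s)/a := ⟨(1 - s)/a, rfl⟩
  have hs2 : s^2 = 1 - a^2 := by rw [hs_def]; exact Real.sq_sqrt (by nlinarith)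
  have hs_pos : 0 < s := by rw [hs_def]; exact Real.sqrt_pos.2 (by nlinarith)
  have hs_le : s ≤ 1 := by nlinarith
  have hK : a * r₀ = 1 - s := by
    rcases eq_or_lt_of_le ha0 with h|h
    · have : s = 1 := by rw [hs_def, ←h]; simp
      rw [←h, this]; simp
    · rw [hr₀_def]; field_simp
  have hr₀0 : 0 ≤ r₀ := by
    rcases eq_or_lt_of_le ha0 with h|h
    · have : s = 1 := by rw [hs_def, ←h]; simp
      rw [hr₀_def, this, ←h]; simp
    · rw [hr₀_def]; exact div_nonneg (by linarith) h.le
  have hr₀1 : r₀ < 1 := by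
    rcases eq_or_lt_of_le ha0 with h|h
    · have : s = 1 := by rw [hs_def, ←h]; simp
      rw [hr₀_def, this, ←h]; norm_num
    · rw [hr₀_def, div_lt_one h]
      nlinarith
  have hsign1 : ∀ r : ℝ, 0 ≤ r → r ≤ r₀ → 2*r - a*(1+r^2) ≤ 0 := by
    intro r h0 h1
    rcases eq_or_lt_of_le ha0 with h|h
    · have hr0 : r = 0 := by
        have : r₀ = 0 := by
          have : s = 1 := by rw [hs_def, ←h]; simp
          rw [hr₀_def, this, ←h]; simp
        linarith
      rw [hr0, ←h]; norm_num
    · have har : a*r ≤ 1 - s := by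
        calc a*r ≤ a*r₀ := by nlinarith
        _ = 1 - s := hK
      nlinarith [sq_nonneg (1 - a*r)]
  have hsign2 : ∀ r : ℝ, r₀ ≤ r → r ≤ 1 → 0 ≤ 2*r - a*(1+r^2) := by
    intro r h0 h1
    rcases eq_or_lt_of_le ha0 with h|h
    · rw [←h]; nlinarith
    · have har : 1 - s ≤ a*r := by
        calc 1 - s = a*r₀ := hK.symm
        _ ≤ a*r := by nlinarith
      have har2 : a*r < 1 := by nlinarith
      nlinarith
  have hQ : r₀^2 - 2*a*r₀ + 1 = s*((1-r₀)*(1+r₀)) := by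
    rcases eq_or_lt_of_le ha0 with h|h
    · have hss : s = 1 := by rw [hs_def, ←h]; simp
      have : r₀ = 0 := by rw [hr₀_def, hss, ←h]; simp
      rw [this, hss, ←h]; norm_num
    · rw [hr₀_def]
      field_simp
      linear_combination (s-1) * hs2
  -- the two pieces
  obtain ⟨f, hf_def⟩ : ∃ f : ℝ → ℝ, f = fun r : ℝ => (1 - Dh φ (r:ℂ)) * ((2:ℝ) / (1 - r ^ 2)) := by exact ⟨_, rfl⟩
  obtain ⟨g1, hg1_def⟩ : ∃ g : ℝ → ℝ, g = fun r => 2*(1-a)*(1+r)/((1-r)*(r^2-2*a*r+1)) := by exact ⟨_, rfl⟩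
  obtain ⟨g2, hg2_def⟩ : ∃ g : ℝ → ℝ, g = fun r => 2*(1+a)*(1-r)/((1+r)*(r^2-2*a*r+1)) := by exact ⟨_, rfl⟩
  have huIcc1 : uIcc (0:ℝ) r₀ = Icc 0 r₀ := uIcc_of_le hr₀0
  have huIcc2 : uIcc r₀ (1:ℝ) = Icc r₀ 1 := uIcc_of_le hr₀1.le
  have heq1 : EqOn f g1 (uIcc (0:ℝ) r₀) := by
    rw [huIcc1]
    intro r hr
    have hr0 : 0 ≤ r := hr.1
    have hrr₀ : r ≤ r₀ := hr.2
    have hr1 : r < 1 := lt_of_le_of_lt hrr₀ hr₀1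
    have hPr := hP r
    have hr2 : (0:ℝ) < 1 - r^2 := by nlinarith
    have hN := hsign1 r hr0 hrr₀
    have habs : |2*r - a*(1+r^2)| = -(2*r - a*(1+r^2)) := abs_of_nonpos hN
    simp only [hf_def, hg1_def]
    rw [hDh r hr0 hr1, habs]
    have e1 : (1:ℝ) - r ≠ 0 := by nlinarith
    have e2 : (1:ℝ) + r ≠ 0 := by nlinarith
    have e3 : (1:ℝ) - r^2 ≠ 0 := ne_of_gt hr2
    have e4 : r^2 - 2*a*r + 1 ≠ 0 := ne_of_gt hPr
    exact blaschke_aux1 a r e1 e2 e3 e4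
  have heq2 : EqOn f g2 (uIcc r₀ (1:ℝ)) := by
    rw [huIcc2]
    intro r hr
    have hr0 : 0 ≤ r := le_trans hr₀0 hr.1
    rcases eq_or_lt_of_le hr.2 with h1|h1
    · subst h1
      simp only [hf_def, hg2_def]
      norm_num
    · have hPr := hP r
      have hr2 : (0:ℝ) < 1 - r^2 := by nlinarith
      have hN := hsign2 r hr.1 hr.2
      have habs : |2*r - a*(1+r^2)| = 2*r - a*(1+r^2) := abs_of_nonneg hN
      simp only [hf_def, hg2_def]
      rw [hDh r hr0 h1, habs]
      have e1 : (1:ℝ) - r ≠ 0 := by nlinarith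
      have e2 : (1:ℝ) + r ≠ 0 := by nlinarith
      have e3 : (1:ℝ) - r^2 ≠ 0 := ne_of_gt hr2
      have e4 : r^2 - 2*a*r + 1 ≠ 0 := ne_of_gt hPr
      exact blaschke_aux2 a r e1 e2 e3 e4
  -- antiderivatives
  obtain ⟨F1, hF1_def⟩ : ∃ F : ℝ → ℝ, F = fun r => (-2)*Real.log (1-r) + Real.log (r^2-2*a*r+1) := by exact ⟨_, rfl⟩
  obtain ⟨F2, hF2_def⟩ : ∃ F : ℝ → ℝ, F = fun r => 2*Real.log (1+r) - Real.log (r^2-2*a*r+1) := by exact ⟨_, rfl⟩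
  have hPd : ∀ r : ℝ, HasDerivAt (fun r : ℝ => r^2-2*a*r+1) (2*r-2*a) r := by
    intro r
    have := ((hasDerivAt_pow 2 r).sub ((hasDerivAt_id r).const_mul (2*a))).add_const 1
    exact this.congr_deriv (by simp)
  have hdF1 : ∀ r ∈ uIcc (0:ℝ) r₀, HasDerivAt F1 (g1 r) r := by
    rw [huIcc1, hF1_def]
    intro r hr
    have hr1 : (0:ℝ) < 1 - r := by
      have := lt_of_le_of_lt hr.2 hr₀1; linarith
    have hPr := hP r
    have h1 : HasDerivAt (fun r : ℝ => (-2)*Real.log (1-r)) ((-2)*(-1/(1-r))) r := by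
      have hlin : HasDerivAt (fun r : ℝ => 1-r) (-1) r := by
        have := (hasDerivAt_id r).const_sub 1
        exact this
      exact (hlin.log (ne_of_gt hr1)).const_mul (-2)
    have h2 : HasDerivAt (fun r : ℝ => Real.log (r^2-2*a*r+1)) ((2*r-2*a)/(r^2-2*a*r+1)) r :=
      (hPd r).log (ne_of_gt hPr)
    have := h1.add h2
    refine this.congr_deriv ?_
    simp only [hg1_def]
    exact (blaschke_aux3 a r (ne_of_gt hr1) (ne_of_gt hPr)).symm
  have hdF2 : ∀ r ∈ uIcc r₀ (1:ℝ), HasDerivAt F2 (g2 r) r := by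
    rw [huIcc2, hF2_def]
    intro r hr
    have hr1 : (0:ℝ) < 1 + r := by
      have := le_trans hr₀0 hr.1; linarith
    have hPr := hP r
    have h1 : HasDerivAt (fun r : ℝ => 2*Real.log (1+r)) (2*(1/(1+r))) r := by
      have hlin : HasDerivAt (fun r : ℝ => 1+r) (1:ℝ) r := by
        have := (hasDerivAt_id r).const_add 1
        exact this
      exact (hlin.log (ne_of_gt hr1)).const_mul 2
    have h2 : HasDerivAt (fun r : ℝ => Real.log (r^2-2*a*r+1)) ((2*r-2*a)/(r^2-2*a*r+1)) r :=
      (hPd r).log (ne_of_gt hPr)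
    have := h1.sub h2
    refine this.congr_deriv ?_
    simp only [hg2_def]
    exact (blaschke_aux4 a r (ne_of_gt hr1) (ne_of_gt hPr)).symm
  -- continuity / integrability
  have hcont1 : ContinuousOn g1 (uIcc (0:ℝ) r₀) := by
    rw [huIcc1, hg1_def]
    apply ContinuousOn.div
    · fun_prop
    · fun_prop
    · intro r hr
      have hr1 : (0:ℝ) < 1 - r := by
        have := lt_of_le_of_lt hr.2 hr₀1; linarith
      have hPr := hP r
      positivity
  have hcont2 : ContinuousOn g2 (uIcc r₀ (1:ℝ)) := by
    rw [huIcc2, hg2_def]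
    apply ContinuousOn.div
    · fun_prop
    · fun_prop
    · intro r hr
      have hr1 : (0:ℝ) < 1 + r := by
        have := le_trans hr₀0 hr.1; linarith
      have hPr := hP r
      positivity
  have hint_g1 : IntervalIntegrable g1 volume 0 r₀ := hcont1.intervalIntegrable
  have hint_g2 : IntervalIntegrable g2 volume r₀ 1 := hcont2.intervalIntegrable
  have hae1 : g1 =ᵐ[volume.restrict (Set.uIoc (0:ℝ) r₀)] f := by
    filter_upwards [ae_restrict_mem measurableSet_uIoc] with r hr
    exact (heq1 (uIoc_subset_uIcc hr)).symm
  have hae2 : g2 =ᵐ[volume.restrict (Set.uIoc r₀ (1:ℝ))] f := by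
    filter_upwards [ae_restrict_mem measurableSet_uIoc] with r hr
    exact (heq2 (uIoc_subset_uIcc hr)).symm
  have hint_f1 : IntervalIntegrable f volume 0 r₀ := hint_g1.congr_ae hae1
  have hint_f2 : IntervalIntegrable f volume r₀ 1 := hint_g2.congr_ae hae2
  have hIoo : (∫ r in Ioo (0:ℝ) 1, (1 - Dh φ (r:ℂ)) * (2 / (1 - r ^ 2)))
      = ∫ r in (0:ℝ)..1, f r := by
    rw [intervalIntegral.integral_of_le (by norm_num : (0:ℝ) ≤ 1),
      MeasureTheory.integral_Ioc_eq_integral_Ioo, hf_def]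
  rw [hIoo, ← intervalIntegral.integral_add_adjacent_intervals hint_f1 hint_f2,
    intervalIntegral.integral_congr heq1, intervalIntegral.integral_congr heq2,
    intervalIntegral.integral_eq_sub_of_hasDerivAt hdF1 hint_g1,
    intervalIntegral.integral_eq_sub_of_hasDerivAt hdF2 hint_g2,
    hF1_def, hF2_def]
  have h1r₀ : (0:ℝ) < 1 - r₀ := by linarith
  have h1r₀' : (0:ℝ) < 1 + r₀ := by linarith
  have hlogQ : Real.log (r₀^2-2*a*r₀+1)
      = Real.log s + (Real.log (1-r₀) + Real.log (1+r₀)) := by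
    rw [hQ, Real.log_mul (ne_of_gt hs_pos) (by positivity),
      Real.log_mul (ne_of_gt h1r₀) (ne_of_gt h1r₀')]
  have h2a : Real.log (2-2*a) = Real.log 2 + Real.log (1-a) := by
    rw [show (2 - 2*a : ℝ) = 2*(1-a) by ring,
      Real.log_mul two_ne_zero (ne_of_gt ha1')]
  have hlogs : 2 * Real.log s = Real.log (1+a) + Real.log (1-a) := by
    have h : Real.log (s^2) = 2 * Real.log s := by
      rw [Real.log_pow]; norm_num
    rw [hs2, show (1 - a^2 : ℝ) = (1+a)*(1-a) by ring,
      Real.log_mul (by positivity) (ne_of_gt ha1')] at h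
    linarith [h]
  norm_num
  rw [show (1 - 2*a + 1 : ℝ) = 2-2*a by ring]
  linarith [hlogQ, h2a, hlogs]
end

section
/- (Lindelöf-type theorem for hyperbolic distortion, half-plane version, along the real axis) Let F : ℍ → ℍ be holomorphic. Suppose (ζ_n) ⊆ ℍ is a sequence converging to ∞ contained in a sector {|arg ζ| < θ} with θ < π/2, with bounded hyperbolic steps k(ζ_n, ζ_{n+1}) ≤ M, and with D_h F(ζ_n) → 1. Then D_h F(t) → 1 as t → +∞ along the positive real axis. -/
open Set Filter

/-- Pseudo-hyperbolic distance on the right half-plane. -/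
noncomputable def pdistH (z w : ℂ) : ℝ :=
  ‖z - w‖ / ‖z + (starRingEnd ℂ) w‖

/-- Hyperbolic distance on the right half-plane. -/
noncomputable def hdistH (z w : ℂ) : ℝ :=
  Real.log ((1 + pdistH z w) / (1 - pdistH z w))

open Topology
namespace LFD

noncomputable def cayley (a z : ℂ) : ℂ := (z - a) / (z + (starRingEnd ℂ) a)
noncomputable def cayleyInv (a u : ℂ) : ℂ := (a + (starRingEnd ℂ) a * u) / (1 - u)
noncomputable def blaschke (c α : ℂ) : ℂ := (α - c) / (1 - (starRingEnd ℂ) c * α)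

lemma hp_open : IsOpen HalfPlane := isOpen_lt continuous_const Complex.continuous_re

lemma hp_conn : IsPreconnected HalfPlane := by
  have : Convex ℝ HalfPlane := convex_halfSpace_re_gt 0
  exact this.isPreconnected

lemma abs_sub_lt {z w : ℂ} (hz : z ∈ HalfPlane) (hw : w ∈ HalfPlane) :
    ‖z - w‖ < ‖z + (starRingEnd ℂ) w‖ := by
  have hz' : 0 < z.re := hz
  have hw' : 0 < w.re := hw
  apply lt_of_pow_lt_pow_left₀ 2 (norm_nonneg _)
  rw [← Complex.normSq_eq_norm_sq, ← Complex.normSq_eq_norm_sq]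
  simp only [Complex.normSq_apply, Complex.add_re, Complex.add_im, Complex.sub_re,
    Complex.sub_im, Complex.conj_re, Complex.conj_im]
  nlinarith [mul_pos hz' hw']

lemma denom_ne {z w : ℂ} (hz : z ∈ HalfPlane) (hw : w ∈ HalfPlane) :
    z + (starRingEnd ℂ) w ≠ 0 := by
  intro h
  have := abs_sub_lt hz hw
  rw [h] at this
  simp at this
  exact absurd this (not_lt.2 (norm_nonneg _))

lemma denom_pos {z w : ℂ} (hz : z ∈ HalfPlane) (hw : w ∈ HalfPlane) :
    0 < ‖z + (starRingEnd ℂ) w‖ :=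
  norm_pos_iff.mpr (denom_ne hz hw)

lemma pdistH_nonneg (z w : ℂ) : 0 ≤ pdistH z w :=
  div_nonneg (norm_nonneg _) (norm_nonneg _)

lemma pdistH_lt_one {z w : ℂ} (hz : z ∈ HalfPlane) (hw : w ∈ HalfPlane) :
    pdistH z w < 1 :=
  (div_lt_one (denom_pos hz hw)).2 (abs_sub_lt hz hw)

lemma pdistH_symm (z w : ℂ) : pdistH z w = pdistH w z := by
  unfold pdistH
  rw [← Complex.norm_conj (w + (starRingEnd ℂ) z)]
  simp only [map_add, norm_sub_rev, RingHomCompTriple.comp_apply, RingHom.id_apply,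
    Complex.norm_conj]
  rw [add_comm]

lemma pdistH_pos {z w : ℂ} (hz : z ∈ HalfPlane) (hw : w ∈ HalfPlane) (hne : z ≠ w) :
    0 < pdistH z w :=
  div_pos (norm_pos_iff.mpr (sub_ne_zero.2 hne)) (denom_pos hz hw)

lemma memball {v : ℂ} : v ∈ Metric.ball (0:ℂ) 1 ↔ ‖v‖ < 1 := by
  rw [mem_ball_zero_iff]

lemma one_sub_ne {u : ℂ} (hu : ‖u‖ < 1) : (1:ℂ) - u ≠ 0 := by
  intro h
  have : u = 1 := by linear_combination -h
  simp [this] at hu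

lemma add_conj_self_ne {a : ℂ} (ha : a ∈ HalfPlane) : a + (starRingEnd ℂ) a ≠ 0 := by
  intro h
  have := congrArg Complex.re h
  simp [Complex.add_re, Complex.conj_re] at this
  have ha' : 0 < a.re := ha
  linarith

lemma cayleyInv_mem {a u : ℂ} (ha : a ∈ HalfPlane) (hu : ‖u‖ < 1) :
    cayleyInv a u ∈ HalfPlane := by
  have ha' : 0 < a.re := ha
  have h1 : (1:ℂ) - u ≠ 0 := one_sub_ne hu
  show 0 < (cayleyInv a u).re
  rw [cayleyInv, Complex.div_re]
  have hn : 0 < Complex.normSq (1 - u) := by rwa [Complex.normSq_pos]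
  rw [← add_div]
  apply div_pos _ hn
  have hu2 : u.re^2 + u.im^2 < 1 := by
    have h2 : Complex.normSq u < 1 := by
      rw [← Complex.sq_norm]
      nlinarith [norm_nonneg u]
    rw [Complex.normSq_apply] at h2
    nlinarith
  simp only [Complex.add_re, Complex.add_im, Complex.mul_re, Complex.mul_im,
    Complex.conj_re, Complex.conj_im, Complex.sub_re, Complex.sub_im, Complex.one_re,
    Complex.one_im, Complex.normSq_apply]
  nlinarith [ha', hu2]

lemma one_sub_cayley {a b : ℂ} (ha : a ∈ HalfPlane) (hb : b ∈ HalfPlane) :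
    1 - cayley a b = (a + (starRingEnd ℂ) a) / (b + (starRingEnd ℂ) a) := by
  rw [cayley, eq_div_iff (denom_ne hb ha), sub_mul,
    div_mul_cancel₀ _ (denom_ne hb ha)]
  ring

lemma cayleyInv_cayley {a b : ℂ} (ha : a ∈ HalfPlane) (hb : b ∈ HalfPlane) :
    cayleyInv a (cayley a b) = b := by
  rw [cayleyInv, one_sub_cayley ha hb, cayley]
  have h1 := denom_ne hb ha
  have h2 := add_conj_self_ne ha
  field_simp
  ring

lemma cayleyInv_zero (a : ℂ) : cayleyInv a 0 = a := by simp [cayleyInv]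

lemma abs_cayley (a z : ℂ) : ‖cayley a z‖ = pdistH z a := by
  rw [cayley, norm_div]; rfl

lemma cayley_abs_lt {a z : ℂ} (ha : a ∈ HalfPlane) (hz : z ∈ HalfPlane) :
    ‖cayley a z‖ < 1 := by
  rw [abs_cayley]; exact pdistH_lt_one hz ha

lemma blaschke_den_ne {c α : ℂ} (hc : ‖c‖ < 1) (hα : ‖α‖ < 1) :
    1 - (starRingEnd ℂ) c * α ≠ 0 := by
  intro h
  have h1 : (starRingEnd ℂ) c * α = 1 := by linear_combination -h
  have := congrArg norm h1
  rw [norm_mul, Complex.norm_conj, norm_one] at this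
  nlinarith [norm_nonneg c, norm_nonneg α]

lemma blaschke_abs_lt {c α : ℂ} (hc : ‖c‖ < 1) (hα : ‖α‖ < 1) :
    ‖blaschke c α‖ < 1 := by
  rw [blaschke, norm_div, div_lt_one (norm_pos_iff.mpr (blaschke_den_ne hc hα))]
  apply lt_of_pow_lt_pow_left₀ 2 (norm_nonneg _)
  rw [← Complex.normSq_eq_norm_sq, ← Complex.normSq_eq_norm_sq]
  have h1 : Complex.normSq c < 1 := by rw [← Complex.sq_norm]; nlinarith [norm_nonneg c]
  have h2 : Complex.normSq α < 1 := by rw [← Complex.sq_norm]; nlinarith [norm_nonneg α]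
  simp only [Complex.normSq_apply, Complex.sub_re, Complex.sub_im, Complex.mul_re,
    Complex.mul_im, Complex.conj_re, Complex.conj_im, Complex.one_re, Complex.one_im] at *
  nlinarith [h1, h2]

lemma blaschke_self (c : ℂ) : blaschke c c = 0 := by simp [blaschke]

/-- Schwarz–Pick: holomorphic map from the half-plane to the unit disc. -/
lemma SPD {g : ℂ → ℂ} (hg : DifferentiableOn ℂ g HalfPlane)
    (hb : ∀ x ∈ HalfPlane, ‖g x‖ < 1)
    {a b : ℂ} (ha : a ∈ HalfPlane) (hbm : b ∈ HalfPlane) :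
    ‖blaschke (g a) (g b)‖ ≤ pdistH a b := by
  set G : ℂ → ℂ := fun v => blaschke (g a) (g (cayleyInv a v)) with hG
  have hmapsInv : MapsTo (cayleyInv a) (Metric.ball (0:ℂ) 1) HalfPlane := by
    intro v hv
    exact cayleyInv_mem ha (memball.1 hv)
  have hdInv : DifferentiableOn ℂ (cayleyInv a) (Metric.ball (0:ℂ) 1) := by
    apply DifferentiableOn.div
    · exact (differentiableOn_const _).add ((differentiableOn_const _).mul differentiableOn_id)
    · exact (differentiableOn_const _).sub differentiableOn_id
    · intro v hv
      exact one_sub_ne (memball.1 hv)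
  have hdg : DifferentiableOn ℂ (fun v => g (cayleyInv a v)) (Metric.ball (0:ℂ) 1) :=
    hg.comp hdInv hmapsInv
  have hmapsg : MapsTo (fun v => g (cayleyInv a v)) (Metric.ball (0:ℂ) 1)
      (Metric.ball (0:ℂ) 1) := by
    intro v hv
    rw [memball]
    exact hb _ (hmapsInv hv)
  have hga : ‖g a‖ < 1 := hb a ha
  have hdB : DifferentiableOn ℂ (blaschke (g a)) (Metric.ball (0:ℂ) 1) := by
    apply DifferentiableOn.div
    · exact differentiableOn_id.sub (differentiableOn_const _)
    · exact (differentiableOn_const _).sub ((differentiableOn_const _).mul differentiableOn_id)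
    · intro v hv
      exact blaschke_den_ne hga (memball.1 hv)
  have hdG : DifferentiableOn ℂ G (Metric.ball (0:ℂ) 1) := hdB.comp hdg hmapsg
  have hmapsG : MapsTo G (Metric.ball (0:ℂ) 1) (Metric.ball (0:ℂ) 1) := by
    intro v hv
    rw [memball]
    exact blaschke_abs_lt hga (memball.1 (hmapsg hv))
  have hG0 : G 0 = 0 := by
    rw [hG]
    simp only [cayleyInv_zero]
    exact blaschke_self _
  have hv : ‖cayley a b‖ < 1 := cayley_abs_lt ha hbm
  have := Complex.norm_le_norm_of_mapsTo_ball hdG (hmapsG.mono_right Metric.ball_subset_closedBall) hG0 hv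
  rw [hG] at this
  simp only [cayleyInv_cayley ha hbm] at this
  rwa [abs_cayley, pdistH_symm] at this

/-- Schwarz–Pick for self-maps of the half-plane. -/
lemma SP1 {F : ℂ → ℂ} (hF : DifferentiableOn ℂ F HalfPlane)
    (hmap : MapsTo F HalfPlane HalfPlane)
    {a b : ℂ} (ha : a ∈ HalfPlane) (hb : b ∈ HalfPlane) :
    pdistH (F a) (F b) ≤ pdistH a b := by
  have hg : DifferentiableOn ℂ (fun x => cayley (F a) (F x)) HalfPlane := by
    apply DifferentiableOn.div
    · exact hF.sub (differentiableOn_const _)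
    · exact hF.add (differentiableOn_const _)
    · intro x hx
      exact denom_ne (hmap hx) (hmap ha)
  have hb' : ∀ x ∈ HalfPlane, ‖cayley (F a) (F x)‖ < 1 := fun x hx =>
    cayley_abs_lt (hmap ha) (hmap hx)
  have h := SPD hg hb' ha hb
  have hga : cayley (F a) (F a) = 0 := by
    rw [cayley, sub_self, zero_div]
  rw [hga] at h
  rw [show blaschke 0 (cayley (F a) (F b)) = cayley (F a) (F b) by simp [blaschke]] at h
  rw [abs_cayley] at h
  rwa [pdistH_symm (F a) (F b)]

end LFD

namespace LFD2
open LFD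

noncomputable def gfun (F : ℂ → ℂ) (z : ℂ) : ℂ → ℂ :=
  fun w => dslope F z w * ((w + (starRingEnd ℂ) z) / (F w + (starRingEnd ℂ) (F z)))

variable {F : ℂ → ℂ} {z w : ℂ}

lemma gfun_diffOn (hF : DifferentiableOn ℂ F HalfPlane)
    (hmap : MapsTo F HalfPlane HalfPlane) (hz : z ∈ HalfPlane) :
    DifferentiableOn ℂ (gfun F z) HalfPlane := by
  have hds : DifferentiableOn ℂ (dslope F z) HalfPlane := by
    intro w hw
    rcases eq_or_ne w z with rfl | h
    · obtain ⟨p, hp⟩ := hF.analyticAt (hp_open.mem_nhds hw)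
      exact hp.has_fpower_series_dslope_fslope.analyticAt.differentiableAt.differentiableWithinAt
    · exact ((differentiableAt_dslope_of_ne h).2
        (hF.differentiableAt (hp_open.mem_nhds hw))).differentiableWithinAt
  apply hds.mul
  apply DifferentiableOn.div
  · exact differentiableOn_id.add (differentiableOn_const _)
  · exact hF.add (differentiableOn_const _)
  · intro x hx
    exact denom_ne (hmap hx) (hmap hz)

lemma abs_gfun_of_ne (hz : z ∈ HalfPlane) (hw : w ∈ HalfPlane)
    (hmap : MapsTo F HalfPlane HalfPlane) (hne : w ≠ z) :
    ‖gfun F z w‖ = pdistH (F w) (F z) / pdistH w z := by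
  rw [gfun]
  simp only [dslope_of_ne _ hne, slope, vsub_eq_sub, smul_eq_mul]
  rw [norm_mul, norm_mul, norm_inv, norm_div]
  unfold pdistH
  have h1 : ‖w - z‖ ≠ 0 := norm_ne_zero_iff.mpr (sub_ne_zero.2 hne)
  have h2 : ‖w + (starRingEnd ℂ) z‖ ≠ 0 :=
    norm_ne_zero_iff.mpr (denom_ne hw hz)
  have h3 : ‖F w + (starRingEnd ℂ) (F z)‖ ≠ 0 :=
    norm_ne_zero_iff.mpr (denom_ne (hmap hw) (hmap hz))
  field_simp

lemma gfun_same : gfun F z z = deriv F z *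
    ((z + (starRingEnd ℂ) z) / (F z + (starRingEnd ℂ) (F z))) := by
  rw [gfun, dslope_same]

lemma abs_gfun_same (hz : z ∈ HalfPlane) (hFz : F z ∈ HalfPlane) :
    ‖gfun F z z‖ = DhH F z := by
  rw [gfun_same, norm_mul, norm_div, Complex.add_conj, Complex.add_conj,
    Complex.norm_real, Complex.norm_real, Real.norm_eq_abs, Real.norm_eq_abs]
  have hz' : (0:ℝ) < z.re := hz
  have hFz' : (0:ℝ) < (F z).re := hFz
  rw [abs_of_pos (by linarith), abs_of_pos (by linarith), DhH]
  field_simp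

lemma abs_gfun_symm (F : ℂ → ℂ) (z w : ℂ) :
    ‖gfun F z w‖ = ‖gfun F w z‖ := by
  rcases eq_or_ne w z with rfl | h
  · rfl
  · rw [gfun, gfun, dslope_of_ne _ h, dslope_of_ne _ (Ne.symm h), slope_comm]
    rw [norm_mul, norm_mul]
    congr 1
    rw [norm_div, norm_div]
    rw [← Complex.norm_conj (w + (starRingEnd ℂ) z),
      ← Complex.norm_conj (F w + (starRingEnd ℂ) (F z))]
    simp only [map_add, RingHomCompTriple.comp_apply, RingHom.id_apply, Complex.norm_conj,
      RingHom.id_apply]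
    rw [add_comm ((starRingEnd ℂ) w) z, add_comm ((starRingEnd ℂ) (F w)) (F z)]

end LFD2

namespace LFD3
open LFD LFD2

variable {F : ℂ → ℂ} {z w : ℂ}

lemma abs_gfun_le_one (hF : DifferentiableOn ℂ F HalfPlane)
    (hmap : MapsTo F HalfPlane HalfPlane) (hz : z ∈ HalfPlane) :
    ∀ w ∈ HalfPlane, ‖gfun F z w‖ ≤ 1 := by
  have hne : ∀ w ∈ HalfPlane, w ≠ z → ‖gfun F z w‖ ≤ 1 := by
    intro w hw h
    rw [abs_gfun_of_ne hz hw hmap h, div_le_one (pdistH_pos hw hz h)]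
    exact SP1 hF hmap hw hz
  intro w hw
  rcases eq_or_ne w z with rfl | h
  · have hca : ContinuousAt (fun x => ‖gfun F w x‖) w :=
      continuous_norm.continuousAt.comp
        ((gfun_diffOn hF hmap hw).differentiableAt (hp_open.mem_nhds hw)).continuousAt
    have hEq : 𝓝[HalfPlane \ {w}] w = 𝓝[≠] w := by
      rw [Set.diff_eq, nhdsWithin_inter_of_mem
        (mem_nhdsWithin_of_mem_nhds (hp_open.mem_nhds hw))]
    have hnb : (𝓝[HalfPlane \ {w}] w).NeBot := by
      rw [hEq]; infer_instance
    refine le_of_tendsto (hca.continuousWithinAt :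
      Filter.Tendsto _ (𝓝[HalfPlane \ {w}] w) _) ?_
    filter_upwards [eventually_mem_nhdsWithin] with x hx
    exact hne x hx.1 hx.2
  · exact hne w hw h

lemma DhH_le_one (hF : DifferentiableOn ℂ F HalfPlane)
    (hmap : MapsTo F HalfPlane HalfPlane) (hz : z ∈ HalfPlane) :
    DhH F z ≤ 1 := by
  rw [← abs_gfun_same hz (hmap hz)]
  exact abs_gfun_le_one hF hmap hz z hz

lemma DhH_nonneg (hmap : MapsTo F HalfPlane HalfPlane) (hz : z ∈ HalfPlane) :
    0 ≤ DhH F z := by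
  have h1 : (0:ℝ) < z.re := hz
  have h2 : (0:ℝ) < (F z).re := hmap hz
  exact mul_nonneg (div_nonneg h1.le h2.le) (norm_nonneg _)

/-- If `|gfun F z|` attains the value 1 somewhere, it is constant. -/
lemma gfun_const_of_abs_eq_one (hF : DifferentiableOn ℂ F HalfPlane)
    (hmap : MapsTo F HalfPlane HalfPlane) (hz : z ∈ HalfPlane) {x₀ : ℂ}
    (hx₀ : x₀ ∈ HalfPlane) (h1 : ‖gfun F z x₀‖ = 1) :
    ∀ x ∈ HalfPlane, gfun F z x = gfun F z x₀ := by
  have hmax : IsMaxOn (norm ∘ gfun F z) HalfPlane x₀ := by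
    intro x hx
    simp only [Function.comp_apply]
    rw [h1]
    exact abs_gfun_le_one hF hmap hz x hx
  have := Complex.eqOn_of_isPreconnected_of_isMaxOn_norm hp_conn hp_open
    (gfun_diffOn hF hmap hz) hx₀ hmax
  intro x hx
  exact this hx

lemma gfun_abs_lt_one (hF : DifferentiableOn ℂ F HalfPlane)
    (hmap : MapsTo F HalfPlane HalfPlane) (hz : z ∈ HalfPlane)
    (hu : DhH F z < 1) : ∀ x ∈ HalfPlane, ‖gfun F z x‖ < 1 := by
  intro x hx
  rcases lt_or_ge (‖gfun F z x‖) 1 with h | h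
  · exact h
  · exfalso
    have h1 : ‖gfun F z x‖ = 1 :=
      le_antisymm (abs_gfun_le_one hF hmap hz x hx) h
    have h2 := gfun_const_of_abs_eq_one hF hmap hz hx h1 z hz
    rw [← abs_gfun_same hz (hmap hz), h2, h1] at hu
    exact lt_irrefl _ hu

lemma rigid (hF : DifferentiableOn ℂ F HalfPlane)
    (hmap : MapsTo F HalfPlane HalfPlane) {z₀ : ℂ} (hz₀ : z₀ ∈ HalfPlane)
    (h1 : DhH F z₀ = 1) : ∀ w ∈ HalfPlane, DhH F w = 1 := by
  intro w hw
  have ha : ‖gfun F z₀ z₀‖ = 1 := by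
    rw [abs_gfun_same hz₀ (hmap hz₀)]; exact h1
  have h2 := gfun_const_of_abs_eq_one hF hmap hz₀ hz₀ ha w hw
  have h3 : ‖gfun F w z₀‖ = 1 := by
    rw [← abs_gfun_symm, h2, ha]
  have h4 := gfun_const_of_abs_eq_one hF hmap hw hz₀ h3 w hw
  rw [← abs_gfun_same hw (hmap hw), h4, h3]

end LFD3

namespace LFD4
open LFD LFD2 LFD3

noncomputable def lam (x : ℝ) : ℝ := Real.log ((1 + x) / (1 - x))

lemma hdistH_eq (z w : ℂ) : hdistH z w = lam (pdistH z w) := rfl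

lemma lam_zero : lam 0 = 0 := by simp [lam]

lemma lam_nonneg {x : ℝ} (h0 : 0 ≤ x) (h1 : x < 1) : 0 ≤ lam x :=
  Real.log_nonneg (by rw [le_div_iff₀ (by linarith)]; linarith)

lemma lam_le_lam {x y : ℝ} (h0 : 0 ≤ x) (hxy : x ≤ y) (h1 : y < 1) : lam x ≤ lam y := by
  apply Real.log_le_log (div_pos (by linarith) (by linarith))
  rw [div_le_div_iff₀ (by linarith) (by linarith)]
  nlinarith

lemma lam_lt_lam {x y : ℝ} (h0 : 0 ≤ x) (hxy : x < y) (h1 : y < 1) : lam x < lam y := by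
  apply Real.log_lt_log (div_pos (by linarith) (by linarith))
  rw [div_lt_div_iff₀ (by linarith) (by linarith)]
  nlinarith

lemma lam_step {x y p : ℝ} (hx0 : 0 ≤ x) (hx1 : x < 1) (hy0 : 0 ≤ y) (hy1 : y < 1)
    (hp0 : 0 ≤ p) (hp1 : p < 1) (h : x - y ≤ p * (1 - x * y)) :
    lam x ≤ lam y + lam p := by
  rw [lam, lam, lam, ← Real.log_mul (ne_of_gt (div_pos (by linarith) (by linarith)))
    (ne_of_gt (div_pos (by linarith) (by linarith)))]
  apply Real.log_le_log (div_pos (by linarith) (by linarith))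
  rw [div_mul_div_comm, div_le_div_iff₀ (by linarith)
    (mul_pos (by linarith) (by linarith))]
  nlinarith

lemma hdistH_nonneg {z w : ℂ} (hz : z ∈ HalfPlane) (hw : w ∈ HalfPlane) :
    0 ≤ hdistH z w := by
  rw [hdistH_eq]
  exact lam_nonneg (pdistH_nonneg z w) (pdistH_lt_one hz hw)

lemma real_key {x y p d e s : ℝ} (hx0 : 0 ≤ x) (hx1 : x < 1) (hy0 : 0 ≤ y) (hy1 : y < 1)
    (hp0 : 0 ≤ p) (hd0 : 0 ≤ d) (he0 : 0 ≤ e) (h : d ≤ p * e)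
    (hd2 : d^2 = x^2 + y^2 - 2*s) (he2 : e^2 = 1 - 2*s + x^2*y^2) (hs : s ≤ x*y) :
    x - y ≤ p * (1 - x * y) := by
  have hq1 : 0 < 1 - x*y := by nlinarith
  rcases le_or_gt x y with hxy | hxy
  · nlinarith [mul_nonneg hp0 hq1.le]
  · have h5 : 0 ≤ (1 - x*y)^2 - (x - y)^2 := by
      have hfac : (1 - x*y)^2 - (x - y)^2 = ((1-x)*(1+y))*((1+x)*(1-y)) := by ring
      rw [hfac]
      have c1 : (0:ℝ) < (1-x)*(1+y) := mul_pos (by linarith) (by linarith)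
      have c2 : (0:ℝ) < (1+x)*(1-y) := mul_pos (by linarith) (by linarith)
      positivity
    have h4 : 0 ≤ x*y - s := by linarith
    have ident : (1 - x*y)^2 * d^2 - (x - y)^2 * e^2
        = 2*(x*y - s)*((1 - x*y)^2 - (x - y)^2) := by
      rw [hd2, he2]; ring
    have hde2 : d^2 ≤ p^2 * e^2 := by
      have := mul_le_mul h h hd0 (mul_nonneg hp0 he0)
      nlinarith
    have he2pos : 0 < e^2 := by nlinarith
    have key2 : (x - y)^2 * e^2 ≤ (p * (1 - x*y))^2 * e^2 := by
      nlinarith [mul_nonneg h4 h5, mul_pos hq1 hq1]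
    have key3 : (x - y)^2 ≤ (p * (1 - x*y))^2 := le_of_mul_le_mul_right key2 he2pos
    nlinarith [mul_nonneg hp0 hq1.le]

lemma step {a b : ℂ} {p : ℝ} (ha : ‖a‖ < 1) (hb : ‖b‖ < 1)
    (hp0 : 0 ≤ p) (hp1 : p < 1)
    (h : ‖a - b‖ ≤ p * ‖1 - (starRingEnd ℂ) b * a‖) :
    lam (‖a‖) ≤ lam (‖b‖) + lam p := by
  have hx0 : 0 ≤ ‖a‖ := norm_nonneg a
  have hy0 : 0 ≤ ‖b‖ := norm_nonneg b
  apply lam_step hx0 ha hy0 hb hp0 hp1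
  have hs : ((starRingEnd ℂ) b * a).re ≤ ‖a‖ * ‖b‖ := by
    calc ((starRingEnd ℂ) b * a).re ≤ ‖(starRingEnd ℂ) b * a‖ :=
          Complex.re_le_norm _
      _ = ‖a‖ * ‖b‖ := by
          rw [norm_mul, Complex.norm_conj, mul_comm]
  have ex : ‖a‖ ^ 2 = a.re^2 + a.im^2 := by
    rw [Complex.sq_norm, Complex.normSq_apply]; ring
  have ey : ‖b‖ ^ 2 = b.re^2 + b.im^2 := by
    rw [Complex.sq_norm, Complex.normSq_apply]; ring
  have hd2 : ‖a - b‖ ^ 2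
      = ‖a‖ ^ 2 + ‖b‖ ^ 2 - 2 * ((starRingEnd ℂ) b * a).re := by
    rw [Complex.sq_norm, Complex.normSq_apply, ex, ey]
    simp only [Complex.sub_re, Complex.sub_im, Complex.mul_re, Complex.mul_im,
      Complex.conj_re, Complex.conj_im]
    ring
  have he2 : ‖1 - (starRingEnd ℂ) b * a‖ ^ 2
      = 1 - 2 * ((starRingEnd ℂ) b * a).re + ‖a‖ ^ 2 * ‖b‖ ^ 2 := by
    rw [Complex.sq_norm, Complex.normSq_apply, ex, ey]
    simp only [Complex.sub_re, Complex.sub_im, Complex.mul_re, Complex.mul_im,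
      Complex.conj_re, Complex.conj_im, Complex.one_re, Complex.one_im]
    ring
  exact real_key hx0 ha hy0 hb hp0 (norm_nonneg _) (norm_nonneg _) h hd2 he2 hs

lemma abs_one_sub_conj_comm (a b : ℂ) :
    ‖1 - (starRingEnd ℂ) a * b‖ = ‖1 - (starRingEnd ℂ) b * a‖ := by
  rw [← Complex.norm_conj (1 - (starRingEnd ℂ) a * b)]
  simp only [map_sub, map_mul, map_one, RingHomCompTriple.comp_apply, RingHom.id_apply]
  rw [mul_comm]

lemma blaschke_bound_unfold {c α : ℂ} {p : ℝ} (hc : ‖c‖ < 1)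
    (hα : ‖α‖ < 1) (h : ‖blaschke c α‖ ≤ p) :
    ‖α - c‖ ≤ p * ‖1 - (starRingEnd ℂ) c * α‖ := by
  rw [blaschke, norm_div, div_le_iff₀ (norm_pos_iff.mpr (blaschke_den_ne hc hα))] at h
  exact h

lemma golusin {F : ℂ → ℂ} (hF : DifferentiableOn ℂ F HalfPlane)
    (hmap : MapsTo F HalfPlane HalfPlane) (hlt : ∀ x ∈ HalfPlane, DhH F x < 1)
    {z w : ℂ} (hz : z ∈ HalfPlane) (hw : w ∈ HalfPlane) :
    lam (DhH F z) ≤ lam (DhH F w) + 2 * hdistH z w := by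
  rcases eq_or_ne z w with rfl | hne
  · have h0 : hdistH z z = 0 := by
      rw [hdistH_eq, show pdistH z z = 0 by simp [pdistH], lam_zero]
    rw [h0]; linarith
  · set p := pdistH z w with hp
    have hp1 : p < 1 := pdistH_lt_one hz hw
    have hp0 : 0 ≤ p := pdistH_nonneg z w
    have hgz := gfun_abs_lt_one hF hmap hz (hlt z hz)
    have hgw := gfun_abs_lt_one hF hmap hw (hlt w hw)
    have h1 := SPD (gfun_diffOn hF hmap hz) hgz hz hw
    have h2 := SPD (gfun_diffOn hF hmap hw) hgw hw hz
    rw [← hp] at h1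
    rw [pdistH_symm w z, ← hp] at h2
    have h1' := blaschke_bound_unfold (hgz z hz) (hgz w hw) h1
    have h2' := blaschke_bound_unfold (hgw w hw) (hgw z hz) h2
    -- step 1 : lam |gz z| ≤ lam |gz w| + lam p
    have s1 : lam (‖gfun F z z‖) ≤ lam (‖gfun F z w‖) + lam p := by
      apply step (hgz z hz) (hgz w hw) hp0 hp1
      rw [show gfun F z z - gfun F z w = -(gfun F z w - gfun F z z) by ring, norm_neg,
        abs_one_sub_conj_comm]
      exact h1'
    -- step 2 : lam |gw z| ≤ lam |gw w| + lam p
    have s2 : lam (‖gfun F w z‖) ≤ lam (‖gfun F w w‖) + lam p :=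
      step (hgw z hz) (hgw w hw) hp0 hp1 h2'
    have e1 : ‖gfun F z z‖ = DhH F z := abs_gfun_same hz (hmap hz)
    have e2 : ‖gfun F w w‖ = DhH F w := abs_gfun_same hw (hmap hw)
    have e3 : ‖gfun F z w‖ = ‖gfun F w z‖ := abs_gfun_symm F z w
    rw [e1, e3] at s1
    rw [e2] at s2
    rw [hdistH_eq, ← hp]
    linarith

end LFD4

namespace LFD5
open LFD LFD2 LFD3 LFD4

lemma ofReal_mem {t : ℝ} (ht : 0 < t) : (t : ℂ) ∈ HalfPlane := by
  show 0 < (t:ℂ).re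
  rwa [Complex.ofReal_re]

lemma pdist_real {a b : ℝ} (ha : 0 < a) (hb : 0 < b) :
    pdistH (a:ℂ) (b:ℂ) = |a - b| / (a + b) := by
  rw [pdistH, Complex.conj_ofReal, ← Complex.ofReal_sub, ← Complex.ofReal_add,
    Complex.norm_real, Complex.norm_real, Real.norm_eq_abs, Real.norm_eq_abs,
    abs_of_pos (show (0:ℝ) < a + b by linarith)]

lemma pdist_real_mono {a t b : ℝ} (ha : 0 < a) (hat : a ≤ t) (htb : t ≤ b) :
    pdistH (a:ℂ) (t:ℂ) ≤ pdistH (a:ℂ) (b:ℂ) := by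
  have ht : 0 < t := lt_of_lt_of_le ha hat
  have hb : 0 < b := lt_of_lt_of_le ht htb
  rw [pdist_real ha ht, pdist_real ha hb, abs_of_nonpos (by linarith),
    abs_of_nonpos (by linarith), div_le_div_iff₀ (by linarith) (by linarith)]
  nlinarith

lemma pdist_abs_le {z w : ℂ} (hz : z ∈ HalfPlane) (hw : w ∈ HalfPlane) :
    pdistH ((‖z‖ : ℝ) : ℂ) ((‖w‖ : ℝ) : ℂ) ≤ pdistH z w := by
  have hz0 : z ≠ 0 := by
    intro h; have : (0:ℝ) < z.re := hz; rw [h] at this; simp at this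
  have hw0 : w ≠ 0 := by
    intro h; have : (0:ℝ) < w.re := hw; rw [h] at this; simp at this
  rw [pdist_real (norm_pos_iff.mpr hz0) (norm_pos_iff.mpr hw0), pdistH]
  apply div_le_div₀ (norm_nonneg _)
  · exact abs_norm_sub_norm_le z w
  · exact denom_pos hz hw
  · calc ‖z + (starRingEnd ℂ) w‖
        ≤ ‖z‖ + ‖(starRingEnd ℂ) w‖ := norm_add_le _ _
      _ = ‖z‖ + ‖w‖ := by rw [Complex.norm_conj]

lemma pdist_sector {z : ℂ} (hz : z ∈ HalfPlane) {θ : ℝ} (hθ2 : θ < Real.pi / 2)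
    (harg : |Complex.arg z| < θ) :
    pdistH z ((‖z‖ : ℝ) : ℂ)
      ≤ Real.sqrt ((1 - Real.cos θ) / (1 + Real.cos θ)) := by
  have hθ0 : 0 < θ := lt_of_le_of_lt (abs_nonneg _) harg
  have hc : 0 < Real.cos θ := Real.cos_pos_of_mem_Ioo ⟨by linarith [Real.pi_pos], hθ2⟩
  have hc1 : Real.cos θ ≤ 1 := Real.cos_le_one θ
  have hzne : z ≠ 0 := by
    intro h; have : (0:ℝ) < z.re := hz; rw [h] at this; simp at this
  have hr : 0 < ‖z‖ := norm_pos_iff.mpr hzne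
  have hcosarg : Real.cos θ ≤ Real.cos (Complex.arg z) := by
    rw [← Real.cos_abs (Complex.arg z)]
    exact Real.cos_le_cos_of_nonneg_of_le_pi (abs_nonneg _)
      (by linarith [Real.pi_pos]) harg.le
  have hre : ‖z‖ * Real.cos θ ≤ z.re := by
    have h1 := Complex.cos_arg hzne
    have h2 := mul_le_mul_of_nonneg_left hcosarg hr.le
    rw [h1, mul_div_cancel₀ _ (ne_of_gt hr)] at h2
    exact h2
  rw [Real.le_sqrt (pdistH_nonneg _ _) (div_nonneg (by linarith) (by linarith))]
  have hmem : ((‖z‖ : ℝ) : ℂ) ∈ HalfPlane := ofReal_mem hr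
  have hden := denom_pos hz hmem
  rw [Complex.conj_ofReal] at hden
  rw [pdistH, Complex.conj_ofReal, div_pow,
    div_le_div_iff₀ (pow_pos hden 2) (by linarith)]
  · have e1 : ‖z - (‖z‖ : ℝ)‖ ^ 2
        = (z.re - ‖z‖)^2 + z.im^2 := by
      rw [Complex.sq_norm, Complex.normSq_apply]
      simp only [Complex.sub_re, Complex.sub_im, Complex.ofReal_re, Complex.ofReal_im]
      ring
    have e2 : ‖z + (‖z‖ : ℝ)‖ ^ 2
        = (z.re + ‖z‖)^2 + z.im^2 := by
      rw [Complex.sq_norm, Complex.normSq_apply]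
      simp only [Complex.add_re, Complex.add_im, Complex.ofReal_re, Complex.ofReal_im]
      ring
    have e3 : z.re^2 + z.im^2 = ‖z‖ ^ 2 := by
      rw [Complex.sq_norm, Complex.normSq_apply]; ring
    rw [e1, e2]
    nlinarith [hre, hr]

lemma exists_x1 {A : ℝ} (hA : 0 < A) :
    ∃ x₁ : ℝ, 0 ≤ x₁ ∧ x₁ < 1 ∧ lam x₁ = A := by
  have hE : 1 < Real.exp A := by
    rw [← Real.exp_zero]
    exact Real.exp_lt_exp.2 hA
  refine ⟨(Real.exp A - 1) / (Real.exp A + 1),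
    div_nonneg (by linarith) (by linarith), ?_, ?_⟩
  · rw [div_lt_one (by linarith)]; linarith
  · have h1 : (1:ℝ) + (Real.exp A - 1) / (Real.exp A + 1)
        = 2 * Real.exp A / (Real.exp A + 1) := by field_simp; ring
    have h2 : (1:ℝ) - (Real.exp A - 1) / (Real.exp A + 1) = 2 / (Real.exp A + 1) := by
      field_simp; ring
    have hne : Real.exp A + 1 ≠ 0 := by positivity
    have h3 : 2 * Real.exp A / (Real.exp A + 1) / (2 / (Real.exp A + 1)) = Real.exp A := by
      field_simp
    rw [lam, h1, h2, h3, Real.log_exp]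

end LFD5


open LFD LFD2 LFD3 LFD4 LFD5 in
theorem lindelof_for_distortion (F : ℂ → ℂ)
    (hF : DifferentiableOn ℂ F HalfPlane)
    (hmap : MapsTo F HalfPlane HalfPlane)
    (θ M : ℝ) (hθ : θ < Real.pi / 2)
    (ζ : ℕ → ℂ)
    (hmem : ∀ n, ζ n ∈ HalfPlane)
    (hsector : ∀ n, |Complex.arg (ζ n)| < θ)
    (hinf : Tendsto (fun n => ‖ζ n‖) atTop atTop)
    (hstep : ∀ n, hdistH (ζ n) (ζ (n + 1)) ≤ M)
    (hdh : Tendsto (fun n => DhH F (ζ n)) atTop (nhds 1)) :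
    Tendsto (fun t : ℝ => DhH F (t : ℂ)) atTop (nhds 1) := by
  classical
  have hθ0 : 0 < θ := lt_of_le_of_lt (abs_nonneg _) (hsector 0)
  have hc : 0 < Real.cos θ := Real.cos_pos_of_mem_Ioo ⟨by linarith [Real.pi_pos], hθ⟩
  set pb := Real.sqrt ((1 - Real.cos θ) / (1 + Real.cos θ)) with hpb
  have hpb0 : 0 ≤ pb := Real.sqrt_nonneg _
  have hpb1 : pb < 1 := by
    have h1 : (1 - Real.cos θ) / (1 + Real.cos θ) < 1 := by
      rw [div_lt_one (by linarith)]
      linarith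
    calc pb < Real.sqrt 1 := Real.sqrt_lt_sqrt
          (div_nonneg (by linarith [Real.cos_le_one θ]) (by linarith)) h1
      _ = 1 := Real.sqrt_one
  set C := lam pb with hCdef
  have hC0 : 0 ≤ C := lam_nonneg hpb0 hpb1
  have hM0 : 0 ≤ M := le_trans (hdistH_nonneg (hmem 0) (hmem 1)) (hstep 0)
  by_cases hrig : ∃ z₀ ∈ HalfPlane, DhH F z₀ = 1
  · obtain ⟨z₀, hz₀, h1⟩ := hrig
    have hall := rigid hF hmap hz₀ h1
    have hev : ∀ᶠ t : ℝ in atTop, DhH F (t:ℂ) = 1 := by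
      filter_upwards [eventually_gt_atTop (0:ℝ)] with t ht
      exact hall _ (ofReal_mem ht)
    exact Tendsto.congr' (hev.mono fun t h => h.symm) tendsto_const_nhds
  · push_neg at hrig
    have hlt : ∀ x ∈ HalfPlane, DhH F x < 1 := fun x hx =>
      lt_of_le_of_ne (DhH_le_one hF hmap hx) (hrig x hx)
    rw [Metric.tendsto_atTop]
    intro ε hε
    set x₀ : ℝ := max (1 - ε/2) 0 with hx₀def
    have hx₀0 : 0 ≤ x₀ := le_max_right _ _
    have hx₀1 : x₀ < 1 := by
      rw [hx₀def]
      exact max_lt (by linarith) one_pos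
    set A := lam x₀ + 2*M + 2*C + 1 with hAdef
    have hlx₀ : 0 ≤ lam x₀ := lam_nonneg hx₀0 hx₀1
    have hA : 0 < A := by rw [hAdef]; linarith
    obtain ⟨x₁, hx₁0, hx₁1, hx₁lam⟩ := exists_x1 hA
    have hev : ∀ᶠ n in atTop, x₁ < DhH F (ζ n) := hdh.eventually (eventually_gt_nhds hx₁1)
    rw [eventually_atTop] at hev
    obtain ⟨N, hN⟩ := hev
    refine ⟨max (‖ζ N‖) 1, fun t ht => ?_⟩
    have ht1 : (1:ℝ) ≤ t := le_trans (le_max_right _ _) ht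
    have htN : ‖ζ N‖ ≤ t := le_trans (le_max_left _ _) ht
    have ht0 : (0:ℝ) < t := by linarith
    have htmem : (t:ℂ) ∈ HalfPlane := ofReal_mem ht0
    have hBev := hinf.eventually_gt_atTop t
    rw [eventually_atTop] at hBev
    obtain ⟨B, hB⟩ := hBev
    set P : ℕ → Prop := fun m => N ≤ m ∧ ‖ζ m‖ ≤ t with hPdef
    have hPN : P N := ⟨le_rfl, htN⟩
    have hNB' : N ≤ max B N := le_max_right _ _
    set n := Nat.findGreatest P (max B N) with hn
    have hPn : P n := Nat.findGreatest_spec hNB' hPN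
    have hnB' : n ≤ max B N := Nat.findGreatest_le _
    have hn1 : t < ‖ζ (n+1)‖ := by
      rcases le_or_gt (n+1) (max B N) with h | h
      · by_contra hcon
        push_neg at hcon
        exact Nat.findGreatest_is_greatest (Nat.lt_succ_self n) h
          ⟨le_trans hPn.1 (Nat.le_succ n), hcon⟩
      · exact hB (n+1) (le_trans (le_max_left _ _) (Nat.le_of_lt h))
    have hzn := hmem n
    have hζne : ζ n ≠ 0 := by
      intro h
      have : (0:ℝ) < (ζ n).re := hzn
      rw [h] at this
      simp at this
    have haζ : 0 < ‖ζ n‖ := norm_pos_iff.mpr hζne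
    have hamem : ((‖ζ n‖ : ℝ) : ℂ) ∈ HalfPlane := ofReal_mem haζ
    have g1 := golusin hF hmap hlt hzn hamem
    have hd1 : hdistH (ζ n) ((‖ζ n‖ : ℝ) : ℂ) ≤ C := by
      rw [hdistH_eq, hCdef]
      exact lam_le_lam (pdistH_nonneg _ _) (pdist_sector hzn hθ (hsector n)) hpb1
    have g2 := golusin hF hmap hlt hamem htmem
    have hd2 : hdistH ((‖ζ n‖ : ℝ) : ℂ) (t:ℂ) ≤ M := by
      rw [hdistH_eq]
      have hstep1 : pdistH ((‖ζ n‖ : ℝ) : ℂ) (t:ℂ)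
          ≤ pdistH (ζ n) (ζ (n+1)) := by
        calc pdistH ((‖ζ n‖ : ℝ) : ℂ) (t:ℂ)
            ≤ pdistH ((‖ζ n‖ : ℝ) : ℂ) ((‖ζ (n+1)‖ : ℝ) : ℂ) :=
              pdist_real_mono haζ hPn.2 hn1.le
          _ ≤ pdistH (ζ n) (ζ (n+1)) := pdist_abs_le (hmem n) (hmem (n+1))
      calc lam (pdistH ((‖ζ n‖ : ℝ) : ℂ) (t:ℂ))
          ≤ lam (pdistH (ζ n) (ζ (n+1))) :=
            lam_le_lam (pdistH_nonneg _ _) hstep1 (pdistH_lt_one (hmem n) (hmem (n+1)))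
        _ = hdistH (ζ n) (ζ (n+1)) := (hdistH_eq _ _).symm
        _ ≤ M := hstep n
    have hlamn : A ≤ lam (DhH F (ζ n)) := by
      rw [← hx₁lam]
      exact lam_le_lam hx₁0 (hN n hPn.1).le (hlt _ hzn)
    have hfin : lam x₀ < lam (DhH F (t:ℂ)) := by
      rw [hAdef] at hlamn
      linarith
    have hut : x₀ ≤ DhH F (t:ℂ) := by
      by_contra hcon
      push_neg at hcon
      have := lam_lt_lam (DhH_nonneg hmap htmem) hcon hx₀1
      linarith
    have hle1 := DhH_le_one hF hmap htmem
    rw [Real.dist_eq, abs_of_nonpos (by linarith)]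
    have hx₀ge : 1 - ε/2 ≤ x₀ := le_max_left _ _
    linarith
end

section
/- Let f : 𝕊 → 𝕊 be holomorphic on the strip 𝕊 = {|Im w| < π/2} and set g(w) = f(w) - w. Fix δ ∈ (0, π/2) and ε > 0 and suppose |Im g(w)| < εδ/8 for all w in the half-strip U = {Re w > u₀, |Im w| < π/2 - δ/2}. Then |g'(w)| < ε for every w with Re w > u₀ + δ/2 and |Im w| < π/2 - δ. -/
open Set Filter

noncomputable def Strip : Set ℂ := {w : ℂ | |w.im| < Real.pi / 2}

theorem strip_derivative_estimate (f : ℂ → ℂ)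
    (hf : DifferentiableOn ℂ f Strip)
    (hmapf : MapsTo f Strip Strip)
    (δ ε u₀ : ℝ) (hδ0 : 0 < δ) (hδ : δ < Real.pi / 2) (hε : 0 < ε)
    (hIm : ∀ w : ℂ, u₀ < w.re → |w.im| < Real.pi / 2 - δ / 2 →
      |(f w - w).im| < ε * δ / 8) :
    ∀ w : ℂ, u₀ + δ / 2 < w.re → |w.im| < Real.pi / 2 - δ →
      ‖deriv (fun z => f z - z) w‖ < ε := by
  intro w₀ hre him
  set g : ℂ → ℂ := fun z => f z - z with hg_def
  set M : ℝ := ε * δ / 8 with hM_def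
  have hM0 : 0 < M := by positivity
  set r : ℝ := δ / 2 with hr_def
  have hr0 : 0 < r := by positivity
  set B : Set ℂ := Metric.ball w₀ r with hB_def
  -- every point of the ball satisfies the hypotheses of hIm
  have hBU : ∀ z ∈ B, u₀ < z.re ∧ |z.im| < Real.pi / 2 - δ / 2 := by
    intro z hz
    have hd : ‖z - w₀‖ < r := by
      simpa [Complex.dist_eq] using (Metric.mem_ball.mp hz)
    have hre' : |(z - w₀).re| ≤ ‖z - w₀‖ := Complex.abs_re_le_norm _
    have him' : |(z - w₀).im| ≤ ‖z - w₀‖ := Complex.abs_im_le_norm _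
    constructor
    · have : |z.re - w₀.re| < r := by
        simpa [Complex.sub_re] using hre'.trans_lt hd
      have := abs_lt.mp this
      linarith [this.1]
    · have h2 : |z.im - w₀.im| < r := by
        simpa [Complex.sub_im] using him'.trans_lt hd
      calc |z.im| ≤ |z.im - w₀.im| + |w₀.im| := by
            have := abs_sub_abs_le_abs_sub z.im w₀.im
            linarith [abs_add_le (z.im - w₀.im) w₀.im, abs_sub_comm z.im w₀.im]
        _ < r + (Real.pi / 2 - δ) := by linarith
        _ = Real.pi / 2 - δ / 2 := by rw [hr_def]; ring
  have hBS : B ⊆ Strip := by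
    intro z hz
    have := (hBU z hz).2
    simp only [Strip, mem_setOf_eq]
    linarith
  have hgB : DifferentiableOn ℂ g B := (hf.mono hBS).sub differentiableOn_id
  have hw₀B : w₀ ∈ B := Metric.mem_ball_self hr0
  have hopen : IsOpen B := Metric.isOpen_ball
  -- bound on imaginary part of g on B
  have hImg : ∀ z ∈ B, |(g z).im| < M := by
    intro z hz
    exact hIm z (hBU z hz).1 (hBU z hz).2
  -- the half-plane map
  set k : ℝ := Real.pi / (2 * M) with hk_def
  have hk0 : 0 < k := by positivity
  set F : ℂ → ℂ := fun z => Complex.exp ((k : ℂ) * g z) with hF_def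
  have hFre : ∀ z ∈ B, 0 < (F z).re := by
    intro z hz
    have him2 : |((k : ℂ) * g z).im| < Real.pi / 2 := by
      have : ((k : ℂ) * g z).im = k * (g z).im := by
        simp [Complex.mul_im, Complex.ofReal_re, Complex.ofReal_im]
      rw [this, abs_mul, abs_of_pos hk0]
      calc k * |(g z).im| < k * M := by
            exact mul_lt_mul_of_pos_left (hImg z hz) hk0
        _ = Real.pi / 2 := by
            rw [hk_def]; field_simp
    rw [hF_def]
    simp only [Complex.exp_re]
    have hcos : 0 < Real.cos ((k : ℂ) * g z).im := by
      apply Real.cos_pos_of_mem_Ioo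
      constructor
      · linarith [(abs_lt.mp him2).1]
      · linarith [(abs_lt.mp him2).2]
    positivity
  have hFB : DifferentiableOn ℂ F B := by
    apply DifferentiableOn.cexp
    exact (differentiableOn_const _).mul hgB
  set c : ℂ := F w₀ with hc_def
  have hcre : 0 < c.re := hFre w₀ hw₀B
  -- the Cayley transform
  set Φ : ℂ → ℂ := fun z => (F z - c) / (F z + (starRingEnd ℂ) c) with hΦ_def
  have hden : ∀ z ∈ B, F z + (starRingEnd ℂ) c ≠ 0 := by
    intro z hz
    intro h
    have : (F z + (starRingEnd ℂ) c).re = 0 := by rw [h]; simp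
    rw [Complex.add_re, Complex.conj_re] at this
    have := hFre z hz
    linarith
  have hΦB : DifferentiableOn ℂ Φ B :=
    (hFB.sub (differentiableOn_const _)).div
      (hFB.add (differentiableOn_const _)) hden
  have hΦw₀ : Φ w₀ = 0 := by
    rw [hΦ_def]
    simp [hc_def]
  have hmaps : MapsTo Φ B (Metric.ball (Φ w₀) 1) := by
    intro z hz
    rw [hΦw₀, Metric.mem_ball, dist_zero_right]
    rw [hΦ_def]
    simp only [norm_div]
    rw [div_lt_one (norm_pos_iff.mpr (hden z hz))]
    have key : Complex.normSq (F z - c) < Complex.normSq (F z + (starRingEnd ℂ) c) := by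
      simp only [Complex.normSq_apply, Complex.sub_re, Complex.sub_im, Complex.add_re,
        Complex.add_im, Complex.conj_re, Complex.conj_im]
      have h1 := hFre z hz
      nlinarith [hcre, h1]
    have h1 : ‖F z - c‖ < ‖F z + (starRingEnd ℂ) c‖ := by
      rw [← Real.sqrt_sq (norm_nonneg (F z - c)),
        ← Real.sqrt_sq (norm_nonneg (F z + (starRingEnd ℂ) c))]
      apply Real.sqrt_lt_sqrt (by positivity)
      rw [Complex.sq_norm, Complex.sq_norm]
      exact key
    simpa using h1
  -- Schwarz lemma
  have hschwarz : ‖deriv Φ w₀‖ ≤ 1 / r :=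
    Complex.norm_deriv_le_div_of_mapsTo_ball hΦB (hmaps.mono_right Metric.ball_subset_closedBall) hr0
  -- compute deriv Φ w₀
  have hgat : DifferentiableAt ℂ g w₀ := hgB.differentiableAt (hopen.mem_nhds hw₀B)
  set g' : ℂ := deriv g w₀ with hg'_def
  have hgd : HasDerivAt g g' w₀ := hgat.hasDerivAt
  have hFd : HasDerivAt F (c * ((k : ℂ) * g')) w₀ := by
    have h1 : HasDerivAt (fun z => (k : ℂ) * g z) ((k : ℂ) * g') w₀ := hgd.const_mul _
    have := h1.cexp
    simpa [hF_def, hc_def] using this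
  have hΦd : HasDerivAt Φ (c * ((k : ℂ) * g') / (c + (starRingEnd ℂ) c)) w₀ := by
    have h1 : HasDerivAt (fun z => F z - c) (c * ((k : ℂ) * g')) w₀ := hFd.sub_const _
    have h2 : HasDerivAt (fun z => F z + (starRingEnd ℂ) c) (c * ((k : ℂ) * g')) w₀ :=
      hFd.add_const _
    have hne : c + (starRingEnd ℂ) c ≠ 0 := hden w₀ hw₀B
    have := h1.div h2 hne
    have e : c * ((k : ℂ) * g') / (c + (starRingEnd ℂ) c) = (c * ((k : ℂ) * g') * (c + (starRingEnd ℂ) c) - (c - c) * (c * ((k : ℂ) * g'))) / (c + (starRingEnd ℂ) c) ^ 2 := by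
      rw [div_eq_div_iff hne (pow_ne_zero 2 hne)]
      ring
    rw [e]
    exact this
  have hderivΦ : deriv Φ w₀ = c * ((k : ℂ) * g') / (c + (starRingEnd ℂ) c) := hΦd.deriv
  -- final computation
  have habs : ‖deriv Φ w₀‖ = ‖c‖ * (k * ‖g'‖) / (2 * c.re) := by
    rw [hderivΦ, Complex.add_conj]
    rw [norm_div, norm_mul, norm_mul]
    have h2c : ‖(((2 * c.re : ℝ) : ℂ))‖ = 2 * c.re := by
      rw [Complex.norm_real, Real.norm_eq_abs]; exact abs_of_pos (by linarith)
    rw [h2c]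
    congr 2
    simp [abs_of_pos hk0]
  have hcabs : c.re ≤ ‖c‖ := Complex.re_le_norm c
  have hcabs0 : 0 < ‖c‖ := lt_of_lt_of_le hcre hcabs
  -- from Schwarz: |c| * k * |g'| / (2 c.re) ≤ 1/r
  have hineq : ‖c‖ * (k * ‖g'‖) / (2 * c.re) ≤ 1 / r := by
    rw [← habs]; exact hschwarz
  have hg'bound : ‖g'‖ ≤ 2 / (k * r) := by
    rw [div_le_div_iff₀ (by positivity) hr0] at hineq
    rw [le_div_iff₀ (by positivity)]
    have h1 : k * ‖g'‖ * c.re ≤ k * ‖g'‖ * ‖c‖ := by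
      apply mul_le_mul_of_nonneg_left hcabs
      positivity
    nlinarith [norm_nonneg g', hcabs0]
  have hfinal : 2 / (k * r) < ε := by
    rw [hk_def, hr_def, hM_def]
    rw [div_lt_iff₀ (by positivity)]
    have hπ : 1 < Real.pi := by linarith [Real.pi_gt_three]
    have heq : ε * (Real.pi / (2 * (ε * δ / 8)) * (δ / 2)) = 2 * Real.pi := by
      field_simp
      ring
    rw [heq]
    linarith
  calc ‖deriv (fun z => f z - z) w₀‖ = ‖g'‖ := by rw [hg'_def, hg_def]
    _ ≤ 2 / (k * r) := hg'bound
    _ < ε := hfinal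
end
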